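/- arXiv:2003.11010 — 7 statements merged into one kernel-verified Lean document; each statement's English description precedes it below -/
import Mathlib

section
/- In the category of directed multigraphs, a pair of injective graph homomorphisms α : A ↪ P and β : B ↪ P is jointly surjective (on both vertices and edges) and forms a pushout of the span (A ↩ D ↪ B), where D is the pullback of α and β, if and only if P is (isomorphic to) the pushout of that span. -/
open CategoryTheory

/-- A directed multigraph: vertex set, edge set, source and target maps. -/
structure MultiGraph where
  V : Type
  E : Type
  s : E → V
  t : E → V

/-- A homomorphism of directed multigraphs. -/
@[ext]
structure MultiGraphHom (G H : MultiGraph) where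
  onV : G.V → H.V
  onE : G.E → H.E
  src : ∀ e, H.s (onE e) = onV (G.s e)
  tgt : ∀ e, H.t (onE e) = onV (G.t e)

/-- The category of directed multigraphs. -/
instance : Category MultiGraph where
  Hom := MultiGraphHom
  id G := ⟨id, id, fun _ => rfl, fun _ => rfl⟩
  comp f g := ⟨g.onV ∘ f.onV, g.onE ∘ f.onE,
    fun e => by simp [g.src, f.src], fun e => by simp [g.tgt, f.tgt]⟩
  id_comp f := rfl
  comp_id f := rfl
  assoc f g h := rfl

@[simp] lemma MultiGraph.comp_onV {G H K : MultiGraph} (f : G ⟶ H) (g : H ⟶ K) :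
    (f ≫ g).onV = g.onV ∘ f.onV := rfl

@[simp] lemma MultiGraph.comp_onE {G H K : MultiGraph} (f : G ⟶ H) (g : H ⟶ K) :
    (f ≫ g).onE = g.onE ∘ f.onE := rfl

/-! ### Auxiliary constructions -/

open Classical in
/-- The "doubling" graph. -/
noncomputable def MG.double (P : MultiGraph) (imV : P.V → Prop) : MultiGraph where
  V := P.V ⊕ P.V
  E := P.E ⊕ P.E
  s e := match e with
    | .inl e => .inl (P.s e)
    | .inr e => if imV (P.s e) then .inl (P.s e) else .inr (P.s e)
  t e := match e with
    | .inl e => .inl (P.t e)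
    | .inr e => if imV (P.t e) then .inl (P.t e) else .inr (P.t e)

/-- The first inclusion into the doubling graph. -/
def MG.dleft (P : MultiGraph) (imV : P.V → Prop) : P ⟶ MG.double P imV :=
  ⟨Sum.inl, Sum.inl, fun _ => rfl, fun _ => rfl⟩

open Classical in
/-- The second map into the doubling graph. -/
noncomputable def MG.dright (P : MultiGraph) (imV : P.V → Prop) (imE : P.E → Prop)
    (h : ∀ e, imE e → imV (P.s e) ∧ imV (P.t e)) : P ⟶ MG.double P imV where
  onV v := if imV v then .inl v else .inr v
  onE e := if imE e then .inl e else .inr e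
  src e := by
    show (MG.double P imV).s (if imE e then Sum.inl e else Sum.inr e)
      = if imV (P.s e) then Sum.inl (P.s e) else Sum.inr (P.s e)
    by_cases he : imE e
    · rw [show (if imE e then Sum.inl e else Sum.inr e : (MG.double P imV).E) = Sum.inl e from if_pos he]
      exact (if_pos (h e he).1).symm
    · rw [show (if imE e then Sum.inl e else Sum.inr e : (MG.double P imV).E) = Sum.inr e from if_neg he]; rfl
  tgt e := by
    show (MG.double P imV).t (if imE e then Sum.inl e else Sum.inr e)
      = if imV (P.t e) then Sum.inl (P.t e) else Sum.inr (P.t e)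
    by_cases he : imE e
    · rw [show (if imE e then Sum.inl e else Sum.inr e : (MG.double P imV).E) = Sum.inl e from if_pos he]
      exact (if_pos (h e he).2).symm
    · rw [show (if imE e then Sum.inl e else Sum.inr e : (MG.double P imV).E) = Sum.inr e from if_neg he]; rfl

open Classical in
lemma MG.dright_onV_pos (P : MultiGraph) (imV : P.V → Prop) (imE : P.E → Prop)
    (h : ∀ e, imE e → imV (P.s e) ∧ imV (P.t e)) (v : P.V) (hv : imV v) :
    (MG.dright P imV imE h).onV v = Sum.inl v := if_pos hv

open Classical in
lemma MG.dright_onV_neg (P : MultiGraph) (imV : P.V → Prop) (imE : P.E → Prop)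
    (h : ∀ e, imE e → imV (P.s e) ∧ imV (P.t e)) (v : P.V) (hv : ¬ imV v) :
    (MG.dright P imV imE h).onV v = Sum.inr v := if_neg hv

open Classical in
lemma MG.dright_onE_pos (P : MultiGraph) (imV : P.V → Prop) (imE : P.E → Prop)
    (h : ∀ e, imE e → imV (P.s e) ∧ imV (P.t e)) (e : P.E) (he : imE e) :
    (MG.dright P imV imE h).onE e = Sum.inl e := if_pos he

open Classical in
lemma MG.dright_onE_neg (P : MultiGraph) (imV : P.V → Prop) (imE : P.E → Prop)
    (h : ∀ e, imE e → imV (P.s e) ∧ imV (P.t e)) (e : P.E) (he : ¬ imE e) :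
    (MG.dright P imV imE h).onE e = Sum.inr e := if_neg he

/-- In the category of directed multigraphs, a pair of injective graph
homomorphisms `α : A ↪ P` and `β : B ↪ P` is jointly surjective (on both
vertices and edges) if and only if `P` is the pushout of the span
`(A ↩ D ↪ B)`, where `D` is the pullback of `α` and `β`. -/
theorem stmt_6 {A B P : MultiGraph} (α : A ⟶ P) (β : B ⟶ P)
    (hαV : Function.Injective α.onV) (hαE : Function.Injective α.onE)
    (hβV : Function.Injective β.onV) (hβE : Function.Injective β.onE)
    {D : MultiGraph} (pA : D ⟶ A) (pB : D ⟶ B)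
    (hpb : IsPullback pA pB α β) :
    ((∀ v : P.V, (∃ a, α.onV a = v) ∨ (∃ b, β.onV b = v)) ∧
     (∀ e : P.E, (∃ a, α.onE a = e) ∨ (∃ b, β.onE b = e)))
      ↔ IsPushout pA pB α β := by
  classical
  constructor
  · rintro ⟨hsV, hsE⟩
    -- Vertex pairs with equal image lift to the pullback.
    have lemV : ∀ (a : A.V) (b : B.V), α.onV a = β.onV b →
        ∃ d : D.V, pA.onV d = a ∧ pB.onV d = b := by
      intro a b hab
      let W : MultiGraph := ⟨PUnit, PEmpty, fun e => e.elim, fun e => e.elim⟩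
      let hA : W ⟶ A := ⟨fun _ => a, fun e => e.elim, fun e => e.elim, fun e => e.elim⟩
      let hB : W ⟶ B := ⟨fun _ => b, fun e => e.elim, fun e => e.elim, fun e => e.elim⟩
      have w : hA ≫ α = hB ≫ β := by
        refine MultiGraphHom.ext ?_ ?_
        · funext v; exact hab
        · funext e; exact e.elim
      refine ⟨(hpb.lift hA hB w).onV PUnit.unit, ?_, ?_⟩
      · exact congrFun (congrArg MultiGraphHom.onV (hpb.lift_fst hA hB w)) PUnit.unit
      · exact congrFun (congrArg MultiGraphHom.onV (hpb.lift_snd hA hB w)) PUnit.unit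
    -- Edge pairs with equal image lift to the pullback.
    have lemE : ∀ (a : A.E) (b : B.E), α.onE a = β.onE b →
        ∃ d : D.E, pA.onE d = a ∧ pB.onE d = b := by
      intro a b hab
      let W : MultiGraph := ⟨Bool, PUnit, fun _ => false, fun _ => true⟩
      let hA : W ⟶ A := ⟨fun v => cond v (A.t a) (A.s a), fun _ => a,
        fun _ => rfl, fun _ => rfl⟩
      let hB : W ⟶ B := ⟨fun v => cond v (B.t b) (B.s b), fun _ => b,
        fun _ => rfl, fun _ => rfl⟩
      have w : hA ≫ α = hB ≫ β := by
        refine MultiGraphHom.ext ?_ ?_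
        · funext v
          cases v
          · show α.onV (A.s a) = β.onV (B.s b)
            rw [← α.src, ← β.src, hab]
          · show α.onV (A.t a) = β.onV (B.t b)
            rw [← α.tgt, ← β.tgt, hab]
        · funext e; exact hab
      refine ⟨(hpb.lift hA hB w).onE PUnit.unit, ?_, ?_⟩
      · exact congrFun (congrArg MultiGraphHom.onE (hpb.lift_fst hA hB w)) PUnit.unit
      · exact congrFun (congrArg MultiGraphHom.onE (hpb.lift_snd hA hB w)) PUnit.unit
    -- Well-definedness of the descent maps on cocones.
    have wdV : ∀ (s : Limits.PushoutCocone pA pB) (a : A.V) (b : B.V),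
        α.onV a = β.onV b → s.inl.onV a = s.inr.onV b := by
      intro s a b hab
      obtain ⟨d, ha, hb⟩ := lemV a b hab
      have h := congrFun (congrArg MultiGraphHom.onV s.condition) d
      rw [← ha, ← hb]; exact h
    have wdE : ∀ (s : Limits.PushoutCocone pA pB) (a : A.E) (b : B.E),
        α.onE a = β.onE b → s.inl.onE a = s.inr.onE b := by
      intro s a b hab
      obtain ⟨d, ha, hb⟩ := lemE a b hab
      have h := congrFun (congrArg MultiGraphHom.onE s.condition) d
      rw [← ha, ← hb]; exact h
    -- The descent maps.
    let dV : ∀ s : Limits.PushoutCocone pA pB, P.V → s.pt.V := fun s v =>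
      if h : ∃ a, α.onV a = v then s.inl.onV h.choose
      else s.inr.onV ((hsV v).resolve_left h).choose
    let dE : ∀ s : Limits.PushoutCocone pA pB, P.E → s.pt.E := fun s e =>
      if h : ∃ a, α.onE a = e then s.inl.onE h.choose
      else s.inr.onE ((hsE e).resolve_left h).choose
    have dVA : ∀ s a, dV s (α.onV a) = s.inl.onV a := by
      intro s a
      have h : ∃ a', α.onV a' = α.onV a := ⟨a, rfl⟩
      simp only [dV, dif_pos h]
      exact congrArg s.inl.onV (hαV h.choose_spec)
    have dVB : ∀ s b, dV s (β.onV b) = s.inr.onV b := by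
      intro s b
      by_cases h : ∃ a', α.onV a' = β.onV b
      · simp only [dV, dif_pos h]
        exact wdV s _ _ h.choose_spec
      · simp only [dV, dif_neg h]
        exact congrArg s.inr.onV (hβV ((hsV (β.onV b)).resolve_left h).choose_spec)
    have dEA : ∀ s a, dE s (α.onE a) = s.inl.onE a := by
      intro s a
      have h : ∃ a', α.onE a' = α.onE a := ⟨a, rfl⟩
      simp only [dE, dif_pos h]
      exact congrArg s.inl.onE (hαE h.choose_spec)
    have dEB : ∀ s b, dE s (β.onE b) = s.inr.onE b := by
      intro s b
      by_cases h : ∃ a', α.onE a' = β.onE b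
      · simp only [dE, dif_pos h]
        exact wdE s _ _ h.choose_spec
      · simp only [dE, dif_neg h]
        exact congrArg s.inr.onE (hβE ((hsE (β.onE b)).resolve_left h).choose_spec)
    have hsrc : ∀ (s : Limits.PushoutCocone pA pB) (e : P.E),
        s.pt.s (dE s e) = dV s (P.s e) := by
      intro s e
      rcases hsE e with ⟨a, rfl⟩ | ⟨b, rfl⟩
      · rw [dEA, s.inl.src, α.src, dVA]
      · rw [dEB, s.inr.src, β.src, dVB]
    have htgt : ∀ (s : Limits.PushoutCocone pA pB) (e : P.E),
        s.pt.t (dE s e) = dV s (P.t e) := by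
      intro s e
      rcases hsE e with ⟨a, rfl⟩ | ⟨b, rfl⟩
      · rw [dEA, s.inl.tgt, α.tgt, dVA]
      · rw [dEB, s.inr.tgt, β.tgt, dVB]
    exact IsPushout.of_isColimit (Limits.PushoutCocone.IsColimit.mk hpb.w
      (fun s => ⟨dV s, dE s, hsrc s, htgt s⟩)
      (fun s => MultiGraphHom.ext (funext fun a => dVA s a) (funext fun a => dEA s a))
      (fun s => MultiGraphHom.ext (funext fun b => dVB s b) (funext fun b => dEB s b))
      (by
        intro s m h1 h2
        refine MultiGraphHom.ext ?_ ?_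
        · funext v
          rcases hsV v with ⟨a, rfl⟩ | ⟨b, rfl⟩
          · show m.onV (α.onV a) = dV s (α.onV a)
            rw [dVA]
            exact congrFun (congrArg MultiGraphHom.onV h1) a
          · show m.onV (β.onV b) = dV s (β.onV b)
            rw [dVB]
            exact congrFun (congrArg MultiGraphHom.onV h2) b
        · funext e
          rcases hsE e with ⟨a, rfl⟩ | ⟨b, rfl⟩
          · show m.onE (α.onE a) = dE s (α.onE a)
            rw [dEA]
            exact congrFun (congrArg MultiGraphHom.onE h1) a
          · show m.onE (β.onE b) = dE s (β.onE b)
            rw [dEB]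
            exact congrFun (congrArg MultiGraphHom.onE h2) b))
  · intro hpo
    set imV : P.V → Prop := fun v => (∃ a, α.onV a = v) ∨ (∃ b, β.onV b = v) with himV
    set imE : P.E → Prop := fun e => (∃ a, α.onE a = e) ∨ (∃ b, β.onE b = e) with himE
    have key : ∀ e, imE e → imV (P.s e) ∧ imV (P.t e) := by
      rintro e (⟨a, rfl⟩ | ⟨b, rfl⟩)
      · exact ⟨Or.inl ⟨A.s a, (α.src a).symm⟩, Or.inl ⟨A.t a, (α.tgt a).symm⟩⟩
      · exact ⟨Or.inr ⟨B.s b, (β.src b).symm⟩, Or.inr ⟨B.t b, (β.tgt b).symm⟩⟩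
    have hfg : MG.dleft P imV = MG.dright P imV imE key := by
      apply hpo.hom_ext
      · refine MultiGraphHom.ext ?_ ?_
        · funext a
          exact (MG.dright_onV_pos P imV imE key (α.onV a) (Or.inl ⟨a, rfl⟩)).symm
        · funext a
          exact (MG.dright_onE_pos P imV imE key (α.onE a) (Or.inl ⟨a, rfl⟩)).symm
      · refine MultiGraphHom.ext ?_ ?_
        · funext b
          exact (MG.dright_onV_pos P imV imE key (β.onV b) (Or.inr ⟨b, rfl⟩)).symm
        · funext b
          exact (MG.dright_onE_pos P imV imE key (β.onE b) (Or.inr ⟨b, rfl⟩)).symm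
    constructor
    · intro v
      by_contra h
      have hv := congrFun (congrArg MultiGraphHom.onV hfg) v
      rw [MG.dright_onV_neg P imV imE key v h] at hv
      exact Sum.inl_ne_inr hv
    · intro e
      by_contra h
      have he := congrFun (congrArg MultiGraphHom.onE hfg) e
      rw [MG.dright_onE_neg P imV imE key e h] at he
      exact Sum.inl_ne_inr he
end

section
/- Let C be an adhesive category, let P be the pushout object of a span of monomorphisms (I ↩ M ↪ O), and let N be any object. If there exists a monomorphism N ↪ P, then there exist objects C₁, C₂, D with monomorphisms forming a span (C₂ ↩ D ↪ C₁) whose pushout is N, together with monomorphisms C₂ ↪ I, D ↪ M, C₁ ↪ O such that the squares (D, C₂, I, M) and (D, C₁, O, M) are pullbacks. -/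
open CategoryTheory
open CategoryTheory.Limits

/-- Forward direction of the "forbidden relation" decomposition theorem.
In an adhesive category, let `P` be the pushout of a span of monomorphisms
`(I ↩ M ↪ O)` and let `N ↪ P` be a monomorphism.  Then `N` decomposes as the
pushout of a span of monomorphisms `(C₂ ↩ D ↪ C₁)` which embeds compatibly
into the given span, such that the squares `(D, C₂, I, M)` and `(D, C₁, O, M)`
are pullbacks. -/
theorem stmt_7 {𝒞 : Type*} [Category 𝒞] [Adhesive 𝒞] {I M O P N : 𝒞}
    (mI : M ⟶ I) (mO : M ⟶ O) [Mono mI] [Mono mO]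
    (iI : I ⟶ P) (iO : O ⟶ P) (H : IsPushout mI mO iI iO)
    (n : N ⟶ P) [Mono n] :
    ∃ (C₁ C₂ D : 𝒞) (d₂ : D ⟶ C₂) (d₁ : D ⟶ C₁)
      (c₂ : C₂ ⟶ N) (c₁ : C₁ ⟶ N)
      (e₂ : C₂ ⟶ I) (eD : D ⟶ M) (e₁ : C₁ ⟶ O),
        Mono d₂ ∧ Mono d₁ ∧ Mono e₂ ∧ Mono eD ∧ Mono e₁ ∧
        IsPushout d₂ d₁ c₂ c₁ ∧
        c₂ ≫ n = e₂ ≫ iI ∧ c₁ ≫ n = e₁ ≫ iO ∧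
        IsPullback d₂ eD e₂ mI ∧
        IsPullback d₁ eD e₁ mO := by
  haveI : Mono iI := Adhesive.mono_of_isPushout_of_mono_right H
  haveI : Mono iO := Adhesive.mono_of_isPushout_of_mono_left H
  -- pullbacks
  let C₂ := pullback n iI
  let C₁ := pullback n iO
  let D := pullback n (mI ≫ iI)
  let c₂ : C₂ ⟶ N := pullback.fst n iI
  let e₂ : C₂ ⟶ I := pullback.snd n iI
  let c₁ : C₁ ⟶ N := pullback.fst n iO
  let e₁ : C₁ ⟶ O := pullback.snd n iO
  let cD : D ⟶ N := pullback.fst n (mI ≫ iI)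
  let eD : D ⟶ M := pullback.snd n (mI ≫ iI)
  have hP2 : IsPullback c₂ e₂ n iI := IsPullback.of_hasPullback n iI
  have hP1 : IsPullback c₁ e₁ n iO := IsPullback.of_hasPullback n iO
  have hPD : IsPullback cD eD n (mI ≫ iI) := IsPullback.of_hasPullback n (mI ≫ iI)
  have hPD' : IsPullback cD eD n (mO ≫ iO) := H.w ▸ hPD
  let d₂ : D ⟶ C₂ := hP2.lift cD (eD ≫ mI) (by rw [hPD.w, Category.assoc])
  let d₁ : D ⟶ C₁ := hP1.lift cD (eD ≫ mO) (by rw [hPD'.w, Category.assoc])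
  have hd₂c : d₂ ≫ c₂ = cD := hP2.lift_fst _ _ _
  have hd₂e : d₂ ≫ e₂ = eD ≫ mI := hP2.lift_snd _ _ _
  have hd₁c : d₁ ≫ c₁ = cD := hP1.lift_fst _ _ _
  have hd₁e : d₁ ≫ e₁ = eD ≫ mO := hP1.lift_snd _ _ _
  have hPB2 : IsPullback d₂ eD e₂ mI :=
    IsPullback.of_right (by rw [hd₂c]; exact hPD) hd₂e hP2
  have hPB1 : IsPullback d₁ eD e₁ mO :=
    IsPullback.of_right (by rw [hd₁c]; exact hPD') hd₁e hP1
  haveI : Mono (mI ≫ iI) := mono_comp _ _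
  haveI hm2 : Mono e₂ := inferInstanceAs (Mono (pullback.snd n iI))
  haveI hm1 : Mono e₁ := inferInstanceAs (Mono (pullback.snd n iO))
  haveI hmD : Mono eD := inferInstanceAs (Mono (pullback.snd n (mI ≫ iI)))
  have hmcD : Mono cD := inferInstanceAs (Mono (pullback.fst n (mI ≫ iI)))
  have hmd₂ : Mono d₂ := by
    have : Mono (d₂ ≫ c₂) := by rw [hd₂c]; exact hmcD
    exact mono_of_mono d₂ c₂
  have hmd₁ : Mono d₁ := by
    have : Mono (d₁ ≫ c₁) := by rw [hd₁c]; exact hmcD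
    exact mono_of_mono d₁ c₁
  have hcomm : CommSq d₂ d₁ c₂ c₁ := ⟨by rw [hd₂c, hd₁c]⟩
  have vk := Adhesive.van_kampen H
  have hiff := vk d₂ d₁ c₂ c₁ eD e₂ e₁ n hPB2 hPB1 ⟨hP2.w⟩ ⟨hP1.w⟩ hcomm
  have hpo : IsPushout d₂ d₁ c₂ c₁ := hiff.mpr ⟨hP2, hP1⟩
  exact ⟨C₁, C₂, D, d₂, d₁, c₂, c₁, e₂, eD, e₁, hmd₂, hmd₁, hm2, hmD, hm1, hpo,
    hP2.w, hP1.w, hPB2, hPB1⟩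
end

section
/- Let C be an adhesive category with effective unions of monomorphisms. Given a pushout P of a monic span (I ↩ M ↪ O), a monic span (C₂ ↩ D ↪ C₁) with pushout N, and monomorphisms C₂ ↪ I, D ↪ M, C₁ ↪ O such that both resulting squares are pullbacks, the morphism N → P induced by the universal property of the pushout N is a monomorphism. -/
open CategoryTheory

/-- A category has *effective unions* of monomorphisms if, whenever `W` is the
pullback of a cospan of monomorphisms `f : X ↪ Z`, `g : Y ↪ Z` and `U` is a
pushout of the resulting span, the comparison morphism `U ⟶ Z` is again a
monomorphism. -/
def EffectiveUnions (𝒞 : Type*) [Category 𝒞] : Prop :=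
  ∀ {W X Y Z U : 𝒞} (f : X ⟶ Z) (g : Y ⟶ Z) (pX : W ⟶ X) (pY : W ⟶ Y),
    Mono f → Mono g → IsPullback pX pY f g →
    ∀ (qX : X ⟶ U) (qY : Y ⟶ U), IsPushout pX pY qX qY →
    ∀ (u : U ⟶ Z), qX ≫ u = f → qY ≫ u = g → Mono u

/-- Backward direction of the double-pullback-embedding characterisation.
Let `𝒞` be an adhesive category with effective unions of monomorphisms.
Given a pushout `P` of a monic span `(I ↩ M ↪ O)`, a monic span
`(C₂ ↩ D ↪ C₁)` with pushout `N`, and monomorphisms `C₂ ↪ I`, `D ↪ M`,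
`C₁ ↪ O` such that both resulting squares are pullbacks, the morphism
`N ⟶ P` induced by the universal property of the pushout `N` is a
monomorphism. -/
theorem stmt_8 {𝒞 : Type*} [Category 𝒞] [Adhesive 𝒞]
    (hEff : EffectiveUnions 𝒞) {I M O P C₁ C₂ D N : 𝒞}
    (mI : M ⟶ I) (mO : M ⟶ O) [Mono mI] [Mono mO]
    (iI : I ⟶ P) (iO : O ⟶ P) (HP : IsPushout mI mO iI iO)
    (d₂ : D ⟶ C₂) (d₁ : D ⟶ C₁) [Mono d₂] [Mono d₁]
    (c₂ : C₂ ⟶ N) (c₁ : C₁ ⟶ N) (HN : IsPushout d₂ d₁ c₂ c₁)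
    (e₂ : C₂ ⟶ I) (eD : D ⟶ M) (e₁ : C₁ ⟶ O)
    [Mono e₂] [Mono eD] [Mono e₁]
    (hpb₂ : IsPullback d₂ eD e₂ mI) (hpb₁ : IsPullback d₁ eD e₁ mO)
    (u : N ⟶ P) (hu₂ : c₂ ≫ u = e₂ ≫ iI) (hu₁ : c₁ ≫ u = e₁ ≫ iO) :
    Mono u := by
  -- `iI` and `iO` are monos since pushouts along monos preserve monos.
  have hiI : Mono iI := Adhesive.mono_of_isPushout_of_mono_right HP
  have hiO : Mono iO := Adhesive.mono_of_isPushout_of_mono_left HP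
  -- the pushout square `HP` is also a pullback
  have HPpb : IsPullback mI mO iI iO := Adhesive.isPullback_of_isPushout_of_mono_left HP
  -- `D` is the pullback of `e₂ ≫ iI` and `e₁ ≫ iO`
  have hw : d₂ ≫ e₂ ≫ iI = d₁ ≫ e₁ ≫ iO := by
    rw [← Category.assoc, hpb₂.w, ← Category.assoc, hpb₁.w,
      Category.assoc, Category.assoc, HP.w]
  have hbig : IsPullback d₂ d₁ (e₂ ≫ iI) (e₁ ≫ iO) := by
    refine IsPullback.of_isLimit (Limits.PullbackCone.IsLimit.mk hw
      (fun s => hpb₂.lift s.fst (HPpb.lift (s.fst ≫ e₂) (s.snd ≫ e₁) (by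
        simpa using s.condition)) (by simp)) (fun s => by simp) (fun s => ?_) (fun s t h1 h2 => ?_))
    · have : (hpb₂.lift s.fst
          (HPpb.lift (s.fst ≫ e₂) (s.snd ≫ e₁) (by simpa using s.condition)) (by simp)) ≫ eD =
          HPpb.lift (s.fst ≫ e₂) (s.snd ≫ e₁) (by simpa using s.condition) := by simp
      refine (cancel_mono e₁).mp ?_
      rw [Category.assoc, hpb₁.w, ← Category.assoc, this]
      simp
    · -- uniqueness
      have hD : t ≫ eD = HPpb.lift (s.fst ≫ e₂) (s.snd ≫ e₁) (by simpa using s.condition) := by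
        refine HPpb.hom_ext ?_ ?_
        · rw [Category.assoc, ← hpb₂.w, ← Category.assoc, h1]; simp
        · rw [Category.assoc, ← hpb₁.w, ← Category.assoc, h2]; simp
      refine hpb₂.hom_ext (by simp [h1]) (by simp [hD])
  exact hEff (e₂ ≫ iI) (e₁ ≫ iO) d₂ d₁ (mono_comp _ _) (mono_comp _ _) hbig
    c₂ c₁ HN u hu₂ hu₁
end

section
/- Let P be the pushout of a monic span of directed multigraphs (I ↩ M ↪ O), and let 𝒩 be a finite set of graphs. Then some N ∈ 𝒩 embeds (via an injective homomorphism) into P if and only if there exist a monic span s = (C₂ ↩ D ↪ C₁) whose pushout is isomorphic to some N ∈ 𝒩, and injective homomorphisms C₂ ↪ I, D ↪ M, C₁ ↪ O such that (C₂ ↩ D ↪ M) is a pullback of (C₂ ↪ I ↩ M) and (C₁ ↩ D ↪ M) is a pullback of (C₁ ↪ O ↩ M). -/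
open CategoryTheory

namespace DPE

open Function

/-! ### Basic componentwise lemmas -/

lemma congV {G H : MultiGraph} {f g : G ⟶ H} (h : f = g) (x : G.V) :
    f.onV x = g.onV x := congrFun (congrArg MultiGraphHom.onV h) x

lemma congE {G H : MultiGraph} {f g : G ⟶ H} (h : f = g) (x : G.E) :
    f.onE x = g.onE x := congrFun (congrArg MultiGraphHom.onE h) x

lemma hom_ext' {G H : MultiGraph} {f g : G ⟶ H}
    (hV : ∀ x, f.onV x = g.onV x) (hE : ∀ x, f.onE x = g.onE x) : f = g := by
  apply MultiGraphHom.ext <;> funext x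
  · exact hV x
  · exact hE x

/-! ### Test objects -/

/-- The one-vertex graph. -/
def pt : MultiGraph := ⟨PUnit, PEmpty, PEmpty.elim, PEmpty.elim⟩

def ptHom {G : MultiGraph} (v : G.V) : pt ⟶ G :=
  ⟨fun _ => v, PEmpty.elim, fun e => e.elim, fun e => e.elim⟩

/-- The single-edge graph. -/
def eg : MultiGraph := ⟨Bool, PUnit, fun _ => false, fun _ => true⟩

def egHom {G : MultiGraph} (e : G.E) : eg ⟶ G :=
  ⟨fun b => Bool.rec (G.s e) (G.t e) b, fun _ => e, fun _ => rfl, fun _ => rfl⟩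

/-! ### Mono ↔ componentwise injective -/

lemma mono_of_inj {G H : MultiGraph} (f : G ⟶ H)
    (hV : Injective f.onV) (hE : Injective f.onE) : Mono f := by
  constructor
  intro X g h hgh
  apply hom_ext'
  · intro x; exact hV (congV hgh x)
  · intro x; exact hE (congE hgh x)

lemma injV_of_mono {G H : MultiGraph} (f : G ⟶ H) [Mono f] : Injective f.onV := by
  intro v w h
  have key : ptHom v ≫ f = ptHom w ≫ f := by
    apply hom_ext'
    · intro x; exact h
    · intro x; exact x.elim
  have := (cancel_mono f).mp key
  exact congV this PUnit.unit

lemma injE_of_mono {G H : MultiGraph} (f : G ⟶ H) [Mono f] : Injective f.onE := by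
  intro e e' h
  have key : egHom e ≫ f = egHom e' ≫ f := by
    apply hom_ext'
    · intro b
      cases b
      · show f.onV (G.s e) = f.onV (G.s e')
        rw [← f.src, ← f.src, h]
      · show f.onV (G.t e) = f.onV (G.t e')
        rw [← f.tgt, ← f.tgt, h]
    · intro _; exact h
  have := (cancel_mono f).mp key
  exact congE this PUnit.unit

/-! ### Extracting elementwise lifts from an abstract pullback -/

lemma pullback_liftV {D C M I : MultiGraph} {d : D ⟶ C} {e : D ⟶ M} {h : C ⟶ I} {m : M ⟶ I}
    (hp : IsPullback d e h m) (c : C.V) (x : M.V) (hcx : h.onV c = m.onV x) :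
    ∃ w : D.V, d.onV w = c ∧ e.onV w = x := by
  have comm : ptHom c ≫ h = ptHom x ≫ m := by
    apply hom_ext'
    · intro _; exact hcx
    · intro z; exact z.elim
  refine ⟨(hp.lift (ptHom c) (ptHom x) comm).onV PUnit.unit, ?_, ?_⟩
  · exact congV (hp.lift_fst (ptHom c) (ptHom x) comm) PUnit.unit
  · exact congV (hp.lift_snd (ptHom c) (ptHom x) comm) PUnit.unit

lemma pullback_liftE {D C M I : MultiGraph} {d : D ⟶ C} {e : D ⟶ M} {h : C ⟶ I} {m : M ⟶ I}
    (hp : IsPullback d e h m) (c : C.E) (x : M.E) (hcx : h.onE c = m.onE x) :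
    ∃ w : D.E, d.onE w = c ∧ e.onE w = x := by
  have comm : egHom c ≫ h = egHom x ≫ m := by
    apply hom_ext'
    · intro b
      cases b
      · show h.onV (C.s c) = m.onV (M.s x)
        rw [← h.src, ← m.src, hcx]
      · show h.onV (C.t c) = m.onV (M.t x)
        rw [← h.tgt, ← m.tgt, hcx]
    · intro _; exact hcx
  refine ⟨(hp.lift (egHom c) (egHom x) comm).onE PUnit.unit, ?_, ?_⟩
  · exact congE (hp.lift_fst (egHom c) (egHom x) comm) PUnit.unit
  · exact congE (hp.lift_snd (egHom c) (egHom x) comm) PUnit.unit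

/-! ### Building a pullback from elementwise data -/

lemma isPullback_of {D C M I : MultiGraph} (d : D ⟶ C) (e : D ⟶ M) (h : C ⟶ I) (m : M ⟶ I)
    (comm : d ≫ h = e ≫ m)
    (hV : ∀ c x, h.onV c = m.onV x → ∃! w : D.V, d.onV w = c ∧ e.onV w = x)
    (hE : ∀ c x, h.onE c = m.onE x → ∃! w : D.E, d.onE w = c ∧ e.onE w = x) :
    IsPullback d e h m := by
  refine IsPullback.of_isLimit (c := Limits.PullbackCone.mk d e comm) ?_
  refine Limits.PullbackCone.IsLimit.mk comm
    (fun s => ⟨fun v => (hV (s.fst.onV v) (s.snd.onV v) (congV s.condition v)).exists.choose,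
               fun ed => (hE (s.fst.onE ed) (s.snd.onE ed) (congE s.condition ed)).exists.choose,
               ?_, ?_⟩) ?_ ?_ ?_
  · -- src
    intro ed
    have he := (hE (s.fst.onE ed) (s.snd.onE ed) (congE s.condition ed)).exists.choose_spec
    refine (hV (s.fst.onV (s.pt.s ed)) (s.snd.onV (s.pt.s ed))
      (congV s.condition _)).unique ⟨?_, ?_⟩
      (hV (s.fst.onV (s.pt.s ed)) (s.snd.onV (s.pt.s ed))
        (congV s.condition _)).exists.choose_spec
    · rw [← d.src, he.1, s.fst.src]
    · rw [← e.src, he.2, s.snd.src]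
  · -- tgt
    intro ed
    have he := (hE (s.fst.onE ed) (s.snd.onE ed) (congE s.condition ed)).exists.choose_spec
    refine (hV (s.fst.onV (s.pt.t ed)) (s.snd.onV (s.pt.t ed))
      (congV s.condition _)).unique ⟨?_, ?_⟩
      (hV (s.fst.onV (s.pt.t ed)) (s.snd.onV (s.pt.t ed))
        (congV s.condition _)).exists.choose_spec
    · rw [← d.tgt, he.1, s.fst.tgt]
    · rw [← e.tgt, he.2, s.snd.tgt]
  · intro s
    apply hom_ext'
    · intro v; exact (hV _ _ (congV s.condition v)).exists.choose_spec.1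
    · intro ed; exact (hE _ _ (congE s.condition ed)).exists.choose_spec.1
  · intro s
    apply hom_ext'
    · intro v; exact (hV _ _ (congV s.condition v)).exists.choose_spec.2
    · intro ed; exact (hE _ _ (congE s.condition ed)).exists.choose_spec.2
  · intro s k hk1 hk2
    apply hom_ext'
    · intro v
      exact (hV _ _ (congV s.condition v)).unique ⟨congV hk1 v, congV hk2 v⟩
        (hV _ _ (congV s.condition v)).exists.choose_spec
    · intro ed
      exact (hE _ _ (congE s.condition ed)).unique ⟨congE hk1 ed, congE hk2 ed⟩
        (hE _ _ (congE s.condition ed)).exists.choose_spec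

/-! ### Building a pushout from elementwise data -/

lemma isPushout_of {M A B Q : MultiGraph} (f : M ⟶ A) (g : M ⟶ B) (h : A ⟶ Q) (i : B ⟶ Q)
    (comm : f ≫ h = g ≫ i)
    (hVinj : Injective h.onV) (hEinj : Injective h.onE)
    (iVinj : Injective i.onV) (iEinj : Injective i.onE)
    (surjV : ∀ q, (∃ a, h.onV a = q) ∨ (∃ b, i.onV b = q))
    (surjE : ∀ q, (∃ a, h.onE a = q) ∨ (∃ b, i.onE b = q))
    (mixV : ∀ a b, h.onV a = i.onV b → ∃ w, f.onV w = a ∧ g.onV w = b)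
    (mixE : ∀ a b, h.onE a = i.onE b → ∃ w, f.onE w = a ∧ g.onE w = b) :
    IsPushout f g h i := by
  classical
  refine IsPushout.of_isColimit (c := Limits.PushoutCocone.mk h i comm) ?_
  have descV : ∀ (X : MultiGraph) (u : A ⟶ X) (w : B ⟶ X), f ≫ u = g ≫ w →
      ∃ dv : Q.V → X.V, (∀ a, dv (h.onV a) = u.onV a) ∧ (∀ b, dv (i.onV b) = w.onV b) := by
    intro X u w hc
    refine ⟨fun q => if hq : ∃ a, h.onV a = q then u.onV hq.choose
      else w.onV ((surjV q).resolve_left hq).choose, ?_, ?_⟩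
    · intro a
      have hq : ∃ a', h.onV a' = h.onV a := ⟨a, rfl⟩
      exact (dif_pos hq).trans (congrArg u.onV (hVinj hq.choose_spec))
    · intro b
      by_cases hq : ∃ a, h.onV a = i.onV b
      · refine (dif_pos hq).trans ?_
        obtain ⟨z, hz1, hz2⟩ := mixV hq.choose b hq.choose_spec
        rw [← hz1, ← hz2]
        exact congV hc z
      · exact (dif_neg hq).trans
          (congrArg w.onV (iVinj ((surjV (i.onV b)).resolve_left hq).choose_spec))
  have descE : ∀ (X : MultiGraph) (u : A ⟶ X) (w : B ⟶ X), f ≫ u = g ≫ w →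
      ∃ de : Q.E → X.E, (∀ a, de (h.onE a) = u.onE a) ∧ (∀ b, de (i.onE b) = w.onE b) := by
    intro X u w hc
    refine ⟨fun q => if hq : ∃ a, h.onE a = q then u.onE hq.choose
      else w.onE ((surjE q).resolve_left hq).choose, ?_, ?_⟩
    · intro a
      have hq : ∃ a', h.onE a' = h.onE a := ⟨a, rfl⟩
      exact (dif_pos hq).trans (congrArg u.onE (hEinj hq.choose_spec))
    · intro b
      by_cases hq : ∃ a, h.onE a = i.onE b
      · refine (dif_pos hq).trans ?_
        obtain ⟨z, hz1, hz2⟩ := mixE hq.choose b hq.choose_spec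
        rw [← hz1, ← hz2]
        exact congE hc z
      · exact (dif_neg hq).trans
          (congrArg w.onE (iEinj ((surjE (i.onE b)).resolve_left hq).choose_spec))
  choose dV dVh dVi using fun (X : MultiGraph) (u : A ⟶ X) (w : B ⟶ X)
    (hc : f ≫ u = g ≫ w) => descV X u w hc
  choose dE dEh dEi using fun (X : MultiGraph) (u : A ⟶ X) (w : B ⟶ X)
    (hc : f ≫ u = g ≫ w) => descE X u w hc
  refine Limits.PushoutCocone.IsColimit.mk comm
    (fun s => ⟨dV s.pt s.inl s.inr s.condition, dE s.pt s.inl s.inr s.condition, ?_, ?_⟩)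
    ?_ ?_ ?_
  · -- src
    intro e
    rcases surjE e with ⟨a, rfl⟩ | ⟨b, rfl⟩
    · rw [dEh, s.inl.src, h.src, dVh]
    · rw [dEi, s.inr.src, i.src, dVi]
  · -- tgt
    intro e
    rcases surjE e with ⟨a, rfl⟩ | ⟨b, rfl⟩
    · rw [dEh, s.inl.tgt, h.tgt, dVh]
    · rw [dEi, s.inr.tgt, i.tgt, dVi]
  · intro s
    apply hom_ext'
    · intro a; exact dVh s.pt s.inl s.inr s.condition a
    · intro a; exact dEh s.pt s.inl s.inr s.condition a
  · intro s
    apply hom_ext'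
    · intro b; exact dVi s.pt s.inl s.inr s.condition b
    · intro b; exact dEi s.pt s.inl s.inr s.condition b
  · intro s k hk1 hk2
    apply hom_ext'
    · intro q
      rcases surjV q with ⟨a, rfl⟩ | ⟨b, rfl⟩
      · exact (congV hk1 a).trans (dVh s.pt s.inl s.inr s.condition a).symm
      · exact (congV hk2 b).trans (dVi s.pt s.inl s.inr s.condition b).symm
    · intro q
      rcases surjE q with ⟨a, rfl⟩ | ⟨b, rfl⟩
      · exact (congE hk1 a).trans (dEh s.pt s.inl s.inr s.condition a).symm
      · exact (congE hk2 b).trans (dEi s.pt s.inl s.inr s.condition b).symm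

/-! ### Concrete pushout via quotients, and extraction of elementwise data
from an abstract pushout of a monic span -/

section QuotPush

variable {Z X Y : Type} (f : Z → X) (g : Z → Y)

/-- The relation generating the pushout quotient. -/
def prel : X ⊕ Y → X ⊕ Y → Prop :=
  fun a b => ∃ z, a = Sum.inl (f z) ∧ b = Sum.inr (g z)

open Classical in
/-- Normal form for elements of the pushout quotient. -/
noncomputable def nf : X ⊕ Y → X ⊕ Y
  | .inl x => .inl x
  | .inr y => if h : ∃ z, g z = y then .inl (f h.choose) else .inr y

variable {f g}

lemma nf_inl (x : X) : nf f g (Sum.inl x) = Sum.inl x := rfl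

open Classical in
lemma nf_inr (y : Y) : nf f g (Sum.inr y) =
    if h : ∃ z, g z = y then Sum.inl (f h.choose) else Sum.inr y := rfl

lemma nf_rel (hg : Injective g) :
    ∀ a b, prel f g a b → nf f g a = nf f g b := by
  rintro _ _ ⟨z, rfl, rfl⟩
  have h : ∃ z', g z' = g z := ⟨z, rfl⟩
  show Sum.inl (f z) = nf f g (Sum.inr (g z))
  rw [nf_inr, dif_pos h, hg h.choose_spec]

lemma quot_nf (hg : Injective g) {a b : X ⊕ Y}
    (h : Quot.mk (prel f g) a = Quot.mk (prel f g) b) : nf f g a = nf f g b :=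
  congrArg (Quot.lift (nf f g) (nf_rel hg)) h

lemma quot_inl_inj (hg : Injective g) {x x' : X}
    (h : Quot.mk (prel f g) (Sum.inl x) = Quot.mk (prel f g) (Sum.inl x')) : x = x' := by
  have := quot_nf hg h
  rw [nf_inl, nf_inl] at this
  exact Sum.inl.inj this

lemma quot_inr_inj (hf : Injective f) (hg : Injective g) {y y' : Y}
    (h : Quot.mk (prel f g) (Sum.inr y) = Quot.mk (prel f g) (Sum.inr y')) : y = y' := by
  classical
  have key := quot_nf hg h
  rw [nf_inr, nf_inr] at key
  by_cases h1 : ∃ z, g z = y <;> by_cases h2 : ∃ z, g z = y'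
  · rw [dif_pos h1, dif_pos h2] at key
    have := hf (Sum.inl.inj key)
    rw [← h1.choose_spec, ← h2.choose_spec, this]
  · rw [dif_pos h1, dif_neg h2] at key; exact absurd key (by simp)
  · rw [dif_neg h1, dif_pos h2] at key; exact absurd key (by simp)
  · rw [dif_neg h1, dif_neg h2] at key; exact Sum.inr.inj key

lemma quot_mixed (hg : Injective g) {x : X} {y : Y}
    (h : Quot.mk (prel f g) (Sum.inl x) = Quot.mk (prel f g) (Sum.inr y)) :
    ∃ z, f z = x ∧ g z = y := by
  classical
  have key := quot_nf hg h
  rw [nf_inl, nf_inr] at key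
  by_cases h1 : ∃ z, g z = y
  · rw [dif_pos h1] at key
    exact ⟨h1.choose, (Sum.inl.inj key).symm, h1.choose_spec⟩
  · rw [dif_neg h1] at key; exact absurd key (by simp)

end QuotPush

/-- Elementwise properties of an abstract pushout of a componentwise-injective span. -/
lemma pushout_props {M I O P : MultiGraph} (mI : M ⟶ I) (mO : M ⟶ O) (iI : I ⟶ P) (iO : O ⟶ P)
    (H : IsPushout mI mO iI iO)
    (h1 : Injective mI.onV) (h2 : Injective mI.onE)
    (h3 : Injective mO.onV) (h4 : Injective mO.onE) :
    Injective iI.onV ∧ Injective iI.onE ∧ Injective iO.onV ∧ Injective iO.onE ∧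
    (∀ p, (∃ a, iI.onV a = p) ∨ (∃ b, iO.onV b = p)) ∧
    (∀ p, (∃ a, iI.onE a = p) ∨ (∃ b, iO.onE b = p)) ∧
    (∀ a b, iI.onV a = iO.onV b → ∃ z, mI.onV z = a ∧ mO.onV z = b) ∧
    (∀ a b, iI.onE a = iO.onE b → ∃ z, mI.onE z = a ∧ mO.onE z = b) := by
  -- the concrete quotient pushout
  set QG : MultiGraph :=
    { V := Quot (prel mI.onV mO.onV)
      E := Quot (prel mI.onE mO.onE)
      s := Quot.lift (Sum.elim (fun e => Quot.mk _ (Sum.inl (I.s e)))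
            (fun e => Quot.mk _ (Sum.inr (O.s e)))) (by
          rintro _ _ ⟨z, rfl, rfl⟩
          show Quot.mk _ (Sum.inl (I.s (mI.onE z))) = Quot.mk _ (Sum.inr (O.s (mO.onE z)))
          rw [mI.src, mO.src]
          exact Quot.sound ⟨M.s z, rfl, rfl⟩)
      t := Quot.lift (Sum.elim (fun e => Quot.mk _ (Sum.inl (I.t e)))
            (fun e => Quot.mk _ (Sum.inr (O.t e)))) (by
          rintro _ _ ⟨z, rfl, rfl⟩
          show Quot.mk _ (Sum.inl (I.t (mI.onE z))) = Quot.mk _ (Sum.inr (O.t (mO.onE z)))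
          rw [mI.tgt, mO.tgt]
          exact Quot.sound ⟨M.t z, rfl, rfl⟩) } with hQG
  set qI : I ⟶ QG :=
    { onV := fun x => Quot.mk _ (Sum.inl x)
      onE := fun e => Quot.mk _ (Sum.inl e)
      src := fun _ => rfl
      tgt := fun _ => rfl } with hqI
  set qO : O ⟶ QG :=
    { onV := fun y => Quot.mk _ (Sum.inr y)
      onE := fun e => Quot.mk _ (Sum.inr e)
      src := fun _ => rfl
      tgt := fun _ => rfl } with hqO
  have HQ : IsPushout mI mO qI qO := by
    refine isPushout_of mI mO qI qO ?_ ?_ ?_ ?_ ?_ ?_ ?_ ?_ ?_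
    · apply hom_ext'
      · intro z; exact Quot.sound ⟨z, rfl, rfl⟩
      · intro z; exact Quot.sound ⟨z, rfl, rfl⟩
    · intro x x' hx; exact quot_inl_inj h3 hx
    · intro x x' hx; exact quot_inl_inj h4 hx
    · intro y y' hy; exact quot_inr_inj h1 h3 hy
    · intro y y' hy; exact quot_inr_inj h2 h4 hy
    · intro q
      induction q using Quot.ind with
      | _ a => rcases a with x | y
               · exact Or.inl ⟨x, rfl⟩
               · exact Or.inr ⟨y, rfl⟩
    · intro q
      induction q using Quot.ind with
      | _ a => rcases a with x | y
               · exact Or.inl ⟨x, rfl⟩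
               · exact Or.inr ⟨y, rfl⟩
    · intro a b hab; exact quot_mixed h3 hab
    · intro a b hab; exact quot_mixed h4 hab
  -- comparison maps
  have wQ : mI ≫ qI = mO ≫ qO := HQ.w
  have wP : mI ≫ iI = mO ≫ iO := H.w
  set φ : P ⟶ QG := H.desc qI qO wQ with hφ
  set ψ : QG ⟶ P := HQ.desc iI iO wP with hψ
  have hiIφ : iI ≫ φ = qI := H.inl_desc qI qO wQ
  have hiOφ : iO ≫ φ = qO := H.inr_desc qI qO wQ
  have hqIψ : qI ≫ ψ = iI := HQ.inl_desc iI iO wP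
  have hqOψ : qO ≫ ψ = iO := HQ.inr_desc iI iO wP
  have hψφ : ψ ≫ φ = 𝟙 QG := by
    apply HQ.hom_ext
    · rw [← Category.assoc, hqIψ, hiIφ, Category.comp_id]
    · rw [← Category.assoc, hqOψ, hiOφ, Category.comp_id]
  have hφψ : φ ≫ ψ = 𝟙 P := by
    apply H.hom_ext
    · rw [← Category.assoc, hiIφ, hqIψ, Category.comp_id]
    · rw [← Category.assoc, hiOφ, hqOψ, Category.comp_id]
  have ψVinj : Injective ψ.onV := by
    intro u v huv
    have hu : φ.onV (ψ.onV u) = u := congV hψφ u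
    have hv : φ.onV (ψ.onV v) = v := congV hψφ v
    rw [← hu, ← hv, huv]
  have ψEinj : Injective ψ.onE := by
    intro u v huv
    have hu : φ.onE (ψ.onE u) = u := congE hψφ u
    have hv : φ.onE (ψ.onE v) = v := congE hψφ v
    rw [← hu, ← hv, huv]
  have hiIV : ∀ a, iI.onV a = ψ.onV (Quot.mk _ (Sum.inl a)) := fun a => (congV hqIψ a).symm
  have hiIE : ∀ a, iI.onE a = ψ.onE (Quot.mk _ (Sum.inl a)) := fun a => (congE hqIψ a).symm
  have hiOV : ∀ b, iO.onV b = ψ.onV (Quot.mk _ (Sum.inr b)) := fun b => (congV hqOψ b).symm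
  have hiOE : ∀ b, iO.onE b = ψ.onE (Quot.mk _ (Sum.inr b)) := fun b => (congE hqOψ b).symm
  refine ⟨?_, ?_, ?_, ?_, ?_, ?_, ?_, ?_⟩
  · intro a a' ha
    rw [hiIV, hiIV] at ha
    exact quot_inl_inj h3 (ψVinj ha)
  · intro a a' ha
    rw [hiIE, hiIE] at ha
    exact quot_inl_inj h4 (ψEinj ha)
  · intro b b' hb
    rw [hiOV, hiOV] at hb
    exact quot_inr_inj h1 h3 (ψVinj hb)
  · intro b b' hb
    rw [hiOE, hiOE] at hb
    exact quot_inr_inj h2 h4 (ψEinj hb)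
  · intro p
    obtain ⟨q, rfl⟩ : ∃ q, ψ.onV q = p := ⟨φ.onV p, congV hφψ p⟩
    induction q using Quot.ind with
    | _ a => rcases a with x | y
             · exact Or.inl ⟨x, hiIV x⟩
             · exact Or.inr ⟨y, hiOV y⟩
  · intro p
    obtain ⟨q, rfl⟩ : ∃ q, ψ.onE q = p := ⟨φ.onE p, congE hφψ p⟩
    induction q using Quot.ind with
    | _ a => rcases a with x | y
             · exact Or.inl ⟨x, hiIE x⟩
             · exact Or.inr ⟨y, hiOE y⟩
  · intro a b hab
    rw [hiIV, hiOV] at hab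
    exact quot_mixed h3 (ψVinj hab)
  · intro a b hab
    rw [hiIE, hiOE] at hab
    exact quot_mixed h4 (ψEinj hab)

end DPE

/-- Double-pullback-embedding equivalence, in the category of directed
multigraphs.  Let `P` be the pushout of a monic span `(I ↩ M ↪ O)` and let
`𝒩` be a finite set of graphs.  Then some `N ∈ 𝒩` embeds into `P` via a
monomorphism iff there exist a monic span `(C₂ ↩ D ↪ C₁)` whose pushout is
(isomorphic to) some `N ∈ 𝒩` and monomorphisms `C₂ ↪ I`, `D ↪ M`, `C₁ ↪ O`
making both resulting squares pullbacks. -/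
theorem stmt_9 {I M O P : MultiGraph}
    (mI : M ⟶ I) (mO : M ⟶ O) [Mono mI] [Mono mO]
    (iI : I ⟶ P) (iO : O ⟶ P) (H : IsPushout mI mO iI iO)
    (𝒩 : Set MultiGraph) (h𝒩 : 𝒩.Finite) :
    (∃ N ∈ 𝒩, ∃ n : N ⟶ P, Mono n) ↔
      ∃ (C₁ C₂ D : MultiGraph) (d₂ : D ⟶ C₂) (d₁ : D ⟶ C₁),
        Mono d₂ ∧ Mono d₁ ∧
        (∃ N ∈ 𝒩, ∃ (c₂ : C₂ ⟶ N) (c₁ : C₁ ⟶ N), IsPushout d₂ d₁ c₂ c₁) ∧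
        ∃ (e₂ : C₂ ⟶ I) (eD : D ⟶ M) (e₁ : C₁ ⟶ O),
          Mono e₂ ∧ Mono eD ∧ Mono e₁ ∧
          IsPullback d₂ eD e₂ mI ∧ IsPullback d₁ eD e₁ mO := by
  classical
  obtain ⟨iIVinj, iIEinj, iOVinj, iOEinj, surjV, surjE, mixV, mixE⟩ :=
    DPE.pushout_props mI mO iI iO H (DPE.injV_of_mono mI) (DPE.injE_of_mono mI)
      (DPE.injV_of_mono mO) (DPE.injE_of_mono mO)
  constructor
  · rintro ⟨N, hN, n, hn⟩
    have nVinj : Function.Injective n.onV := DPE.injV_of_mono n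
    have nEinj : Function.Injective n.onE := DPE.injE_of_mono n
    -- the three preimage graphs
    refine ⟨{ V := {p : N.V × O.V // n.onV p.1 = iO.onV p.2}
              E := {p : N.E × O.E // n.onE p.1 = iO.onE p.2}
              s := fun e => ⟨(N.s e.1.1, O.s e.1.2), by rw [← n.src, e.2, iO.src]⟩
              t := fun e => ⟨(N.t e.1.1, O.t e.1.2), by rw [← n.tgt, e.2, iO.tgt]⟩ },
            { V := {p : N.V × I.V // n.onV p.1 = iI.onV p.2}
              E := {p : N.E × I.E // n.onE p.1 = iI.onE p.2}
              s := fun e => ⟨(N.s e.1.1, I.s e.1.2), by rw [← n.src, e.2, iI.src]⟩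
              t := fun e => ⟨(N.t e.1.1, I.t e.1.2), by rw [← n.tgt, e.2, iI.tgt]⟩ },
            { V := {p : N.V × M.V // n.onV p.1 = iI.onV (mI.onV p.2)}
              E := {p : N.E × M.E // n.onE p.1 = iI.onE (mI.onE p.2)}
              s := fun e => ⟨(N.s e.1.1, M.s e.1.2), by
                rw [← n.src, e.2, ← mI.src, iI.src]⟩
              t := fun e => ⟨(N.t e.1.1, M.t e.1.2), by
                rw [← n.tgt, e.2, ← mI.tgt, iI.tgt]⟩ },
            { onV := fun p => ⟨(p.1.1, mI.onV p.1.2), p.2⟩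
              onE := fun p => ⟨(p.1.1, mI.onE p.1.2), p.2⟩
              src := fun e => by
                apply Subtype.ext
                show (N.s e.1.1, I.s (mI.onE e.1.2)) = (N.s e.1.1, mI.onV (M.s e.1.2))
                rw [mI.src]
              tgt := fun e => by
                apply Subtype.ext
                show (N.t e.1.1, I.t (mI.onE e.1.2)) = (N.t e.1.1, mI.onV (M.t e.1.2))
                rw [mI.tgt] },
            { onV := fun p => ⟨(p.1.1, mO.onV p.1.2), p.2.trans (DPE.congV H.w p.1.2)⟩
              onE := fun p => ⟨(p.1.1, mO.onE p.1.2), p.2.trans (DPE.congE H.w p.1.2)⟩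
              src := fun e => by
                apply Subtype.ext
                show (N.s e.1.1, O.s (mO.onE e.1.2)) = (N.s e.1.1, mO.onV (M.s e.1.2))
                rw [mO.src]
              tgt := fun e => by
                apply Subtype.ext
                show (N.t e.1.1, O.t (mO.onE e.1.2)) = (N.t e.1.1, mO.onV (M.t e.1.2))
                rw [mO.tgt] },
            ?_, ?_, ?_, ?_⟩
    · -- Mono d₂
      apply DPE.mono_of_inj
      · intro p q hpq
        apply Subtype.ext
        have h0 := congrArg Subtype.val hpq
        have h0' : ((p.1.1, mI.onV p.1.2) : N.V × I.V) =
            (q.1.1, mI.onV q.1.2) := h0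
        have h1 := congrArg Prod.fst h0'
        have h2 := congrArg Prod.snd h0'
        exact Prod.ext h1 (DPE.injV_of_mono mI h2)
      · intro p q hpq
        apply Subtype.ext
        have h0 := congrArg Subtype.val hpq
        have h0' : ((p.1.1, mI.onE p.1.2) : N.E × I.E) =
            (q.1.1, mI.onE q.1.2) := h0
        have h1 := congrArg Prod.fst h0'
        have h2 := congrArg Prod.snd h0'
        exact Prod.ext h1 (DPE.injE_of_mono mI h2)
    · -- Mono d₁
      apply DPE.mono_of_inj
      · intro p q hpq
        apply Subtype.ext
        have h0 := congrArg Subtype.val hpq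
        have h0' : ((p.1.1, mO.onV p.1.2) : N.V × O.V) =
            (q.1.1, mO.onV q.1.2) := h0
        have h1 := congrArg Prod.fst h0'
        have h2 := congrArg Prod.snd h0'
        exact Prod.ext h1 (DPE.injV_of_mono mO h2)
      · intro p q hpq
        apply Subtype.ext
        have h0 := congrArg Subtype.val hpq
        have h0' : ((p.1.1, mO.onE p.1.2) : N.E × O.E) =
            (q.1.1, mO.onE q.1.2) := h0
        have h1 := congrArg Prod.fst h0'
        have h2 := congrArg Prod.snd h0'
        exact Prod.ext h1 (DPE.injE_of_mono mO h2)
    · -- pushout of the span is N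
      refine ⟨N, hN,
        { onV := fun p => p.1.1, onE := fun p => p.1.1,
          src := fun e => rfl, tgt := fun e => rfl },
        { onV := fun p => p.1.1, onE := fun p => p.1.1,
          src := fun e => rfl, tgt := fun e => rfl }, ?_⟩
      refine DPE.isPushout_of _ _ _ _ ?_ ?_ ?_ ?_ ?_ ?_ ?_ ?_ ?_
      · exact DPE.hom_ext' (fun _ => rfl) (fun _ => rfl)
      · intro p q hpq
        have hpq' : p.1.1 = q.1.1 := hpq
        apply Subtype.ext
        refine Prod.ext hpq' (iIVinj ?_)
        rw [← p.2, ← q.2, hpq']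
      · intro p q hpq
        have hpq' : p.1.1 = q.1.1 := hpq
        apply Subtype.ext
        refine Prod.ext hpq' (iIEinj ?_)
        rw [← p.2, ← q.2, hpq']
      · intro p q hpq
        have hpq' : p.1.1 = q.1.1 := hpq
        apply Subtype.ext
        refine Prod.ext hpq' (iOVinj ?_)
        rw [← p.2, ← q.2, hpq']
      · intro p q hpq
        have hpq' : p.1.1 = q.1.1 := hpq
        apply Subtype.ext
        refine Prod.ext hpq' (iOEinj ?_)
        rw [← p.2, ← q.2, hpq']
      · intro v
        rcases surjV (n.onV v) with ⟨a, ha⟩ | ⟨b, hb⟩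
        · exact Or.inl ⟨⟨(v, a), ha.symm⟩, rfl⟩
        · exact Or.inr ⟨⟨(v, b), hb.symm⟩, rfl⟩
      · intro v
        rcases surjE (n.onE v) with ⟨a, ha⟩ | ⟨b, hb⟩
        · exact Or.inl ⟨⟨(v, a), ha.symm⟩, rfl⟩
        · exact Or.inr ⟨⟨(v, b), hb.symm⟩, rfl⟩
      · intro a b hab
        obtain ⟨z, hz1, hz2⟩ := mixV a.1.2 b.1.2 (by rw [← a.2, ← b.2, show a.1.1 = b.1.1 from hab])
        refine ⟨⟨(a.1.1, z), by rw [a.2, hz1]⟩, ?_, ?_⟩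
        · exact Subtype.ext (Prod.ext rfl hz1)
        · exact Subtype.ext (Prod.ext hab hz2)
      · intro a b hab
        obtain ⟨z, hz1, hz2⟩ := mixE a.1.2 b.1.2 (by rw [← a.2, ← b.2, show a.1.1 = b.1.1 from hab])
        refine ⟨⟨(a.1.1, z), by rw [a.2, hz1]⟩, ?_, ?_⟩
        · exact Subtype.ext (Prod.ext rfl hz1)
        · exact Subtype.ext (Prod.ext hab hz2)
    · -- the embeddings and the two pullback squares
      refine ⟨{ onV := fun p => p.1.2, onE := fun p => p.1.2,
                src := fun e => rfl, tgt := fun e => rfl },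
              { onV := fun p => p.1.2, onE := fun p => p.1.2,
                src := fun e => rfl, tgt := fun e => rfl },
              { onV := fun p => p.1.2, onE := fun p => p.1.2,
                src := fun e => rfl, tgt := fun e => rfl }, ?_, ?_, ?_, ?_, ?_⟩
      · apply DPE.mono_of_inj
        · intro p q hpq
          have hpq' : p.1.2 = q.1.2 := hpq
          apply Subtype.ext
          refine Prod.ext (nVinj ?_) hpq'
          rw [p.2, q.2, hpq']
        · intro p q hpq
          have hpq' : p.1.2 = q.1.2 := hpq
          apply Subtype.ext
          refine Prod.ext (nEinj ?_) hpq'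
          rw [p.2, q.2, hpq']
      · apply DPE.mono_of_inj
        · intro p q hpq
          have hpq' : p.1.2 = q.1.2 := hpq
          apply Subtype.ext
          refine Prod.ext (nVinj ?_) hpq'
          rw [p.2, q.2, hpq']
        · intro p q hpq
          have hpq' : p.1.2 = q.1.2 := hpq
          apply Subtype.ext
          refine Prod.ext (nEinj ?_) hpq'
          rw [p.2, q.2, hpq']
      · apply DPE.mono_of_inj
        · intro p q hpq
          have hpq' : p.1.2 = q.1.2 := hpq
          apply Subtype.ext
          refine Prod.ext (nVinj ?_) hpq'
          rw [p.2, q.2, hpq']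
        · intro p q hpq
          have hpq' : p.1.2 = q.1.2 := hpq
          apply Subtype.ext
          refine Prod.ext (nEinj ?_) hpq'
          rw [p.2, q.2, hpq']
      · refine DPE.isPullback_of _ _ _ _ ?_ ?_ ?_
        · exact DPE.hom_ext' (fun _ => rfl) (fun _ => rfl)
        · intro c x hcx
          refine ⟨⟨(c.1.1, x), by rw [c.2]; exact congrArg iI.onV hcx⟩,
            ⟨Subtype.ext (Prod.ext rfl hcx.symm), rfl⟩, ?_⟩
          rintro w ⟨hw1, hw2⟩
          have h0 := congrArg Subtype.val hw1
          apply Subtype.ext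
          refine Prod.ext ?_ hw2
          have h1 := congrArg Prod.fst h0
          exact h1
        · intro c x hcx
          refine ⟨⟨(c.1.1, x), by rw [c.2]; exact congrArg iI.onE hcx⟩,
            ⟨Subtype.ext (Prod.ext rfl hcx.symm), rfl⟩, ?_⟩
          rintro w ⟨hw1, hw2⟩
          have h0 := congrArg Subtype.val hw1
          apply Subtype.ext
          refine Prod.ext ?_ hw2
          have h1 := congrArg Prod.fst h0
          exact h1
      · refine DPE.isPullback_of _ _ _ _ ?_ ?_ ?_
        · exact DPE.hom_ext' (fun _ => rfl) (fun _ => rfl)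
        · intro c x hcx
          refine ⟨⟨(c.1.1, x), by
              rw [c.2]; exact (congrArg iO.onV hcx).trans (DPE.congV H.w x).symm⟩,
            ⟨Subtype.ext (Prod.ext rfl hcx.symm), rfl⟩, ?_⟩
          rintro w ⟨hw1, hw2⟩
          have h0 := congrArg Subtype.val hw1
          apply Subtype.ext
          refine Prod.ext ?_ hw2
          have h1 := congrArg Prod.fst h0
          exact h1
        · intro c x hcx
          refine ⟨⟨(c.1.1, x), by
              rw [c.2]; exact (congrArg iO.onE hcx).trans (DPE.congE H.w x).symm⟩,
            ⟨Subtype.ext (Prod.ext rfl hcx.symm), rfl⟩, ?_⟩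
          rintro w ⟨hw1, hw2⟩
          have h0 := congrArg Subtype.val hw1
          apply Subtype.ext
          refine Prod.ext ?_ hw2
          have h1 := congrArg Prod.fst h0
          exact h1
  · -- reverse direction
    rintro ⟨C₁, C₂, D, d₂, d₁, hd₂, hd₁, ⟨N, hN, c₂, c₁, HN⟩, e₂, eD, e₁, he₂, heD, he₁, hp₂, hp₁⟩
    obtain ⟨c₂Vinj, c₂Einj, c₁Vinj, c₁Einj, surjNV, surjNE, mixNV, mixNE⟩ :=
      DPE.pushout_props d₂ d₁ c₂ c₁ HN (DPE.injV_of_mono d₂) (DPE.injE_of_mono d₂)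
        (DPE.injV_of_mono d₁) (DPE.injE_of_mono d₁)
    have w : d₂ ≫ (e₂ ≫ iI) = d₁ ≫ (e₁ ≫ iO) := by
      rw [← Category.assoc, hp₂.w, ← Category.assoc, hp₁.w,
        Category.assoc, Category.assoc, H.w]
    set n : N ⟶ P := HN.desc (e₂ ≫ iI) (e₁ ≫ iO) w with hn
    have t₂ : c₂ ≫ n = e₂ ≫ iI := HN.inl_desc _ _ w
    have t₁ : c₁ ≫ n = e₁ ≫ iO := HN.inr_desc _ _ w
    refine ⟨N, hN, n, DPE.mono_of_inj n ?_ ?_⟩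
    · intro p q hpq
      rcases surjNV p with ⟨a, rfl⟩ | ⟨b, rfl⟩ <;> rcases surjNV q with ⟨a', rfl⟩ | ⟨b', rfl⟩
      · have key : iI.onV (e₂.onV a) = iI.onV (e₂.onV a') :=
          (DPE.congV t₂ a).symm.trans (hpq.trans (DPE.congV t₂ a'))
        rw [DPE.injV_of_mono e₂ (iIVinj key)]
      · have hmix : iI.onV (e₂.onV a) = iO.onV (e₁.onV b') :=
          (DPE.congV t₂ a).symm.trans (hpq.trans (DPE.congV t₁ b'))
        obtain ⟨m, hm1, hm2⟩ := mixV _ _ hmix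
        obtain ⟨u, hu1, hu2⟩ := DPE.pullback_liftV hp₂ a m hm1.symm
        obtain ⟨u', hu1', hu2'⟩ := DPE.pullback_liftV hp₁ b' m hm2.symm
        have huu : u = u' := DPE.injV_of_mono eD (hu2.trans hu2'.symm)
        rw [← hu1, ← hu1', ← huu]
        exact DPE.congV HN.w u
      · have hmix : iI.onV (e₂.onV a') = iO.onV (e₁.onV b) :=
          (DPE.congV t₂ a').symm.trans (hpq.symm.trans (DPE.congV t₁ b))
        obtain ⟨m, hm1, hm2⟩ := mixV _ _ hmix
        obtain ⟨u, hu1, hu2⟩ := DPE.pullback_liftV hp₂ a' m hm1.symm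
        obtain ⟨u', hu1', hu2'⟩ := DPE.pullback_liftV hp₁ b m hm2.symm
        have huu : u = u' := DPE.injV_of_mono eD (hu2.trans hu2'.symm)
        rw [← hu1, ← hu1', ← huu]
        exact (DPE.congV HN.w u).symm
      · have key : iO.onV (e₁.onV b) = iO.onV (e₁.onV b') :=
          (DPE.congV t₁ b).symm.trans (hpq.trans (DPE.congV t₁ b'))
        rw [DPE.injV_of_mono e₁ (iOVinj key)]
    · intro p q hpq
      rcases surjNE p with ⟨a, rfl⟩ | ⟨b, rfl⟩ <;> rcases surjNE q with ⟨a', rfl⟩ | ⟨b', rfl⟩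
      · have key : iI.onE (e₂.onE a) = iI.onE (e₂.onE a') :=
          (DPE.congE t₂ a).symm.trans (hpq.trans (DPE.congE t₂ a'))
        rw [DPE.injE_of_mono e₂ (iIEinj key)]
      · have hmix : iI.onE (e₂.onE a) = iO.onE (e₁.onE b') :=
          (DPE.congE t₂ a).symm.trans (hpq.trans (DPE.congE t₁ b'))
        obtain ⟨m, hm1, hm2⟩ := mixE _ _ hmix
        obtain ⟨u, hu1, hu2⟩ := DPE.pullback_liftE hp₂ a m hm1.symm
        obtain ⟨u', hu1', hu2'⟩ := DPE.pullback_liftE hp₁ b' m hm2.symm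
        have huu : u = u' := DPE.injE_of_mono eD (hu2.trans hu2'.symm)
        rw [← hu1, ← hu1', ← huu]
        exact DPE.congE HN.w u
      · have hmix : iI.onE (e₂.onE a') = iO.onE (e₁.onE b) :=
          (DPE.congE t₂ a').symm.trans (hpq.symm.trans (DPE.congE t₁ b))
        obtain ⟨m, hm1, hm2⟩ := mixE _ _ hmix
        obtain ⟨u, hu1, hu2⟩ := DPE.pullback_liftE hp₂ a' m hm1.symm
        obtain ⟨u', hu1', hu2'⟩ := DPE.pullback_liftE hp₁ b m hm2.symm
        have huu : u = u' := DPE.injE_of_mono eD (hu2.trans hu2'.symm)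
        rw [← hu1, ← hu1', ← huu]
        exact (DPE.congE HN.w u).symm
      · have key : iO.onE (e₁.onE b) = iO.onE (e₁.onE b') :=
          (DPE.congE t₁ b).symm.trans (hpq.trans (DPE.congE t₁ b'))
        rw [DPE.injE_of_mono e₁ (iOEinj key)]
end

section
/- Let π_n be a directed path with n edges and λ_{n+1} a directed cycle with n+1 edges, both rigid directed multigraphs without self-loops. Then a monic span (overlap) (π_n ↩ M ↪ λ_{n+1}) has a pushout that is again a rigid graph without self-loops if and only if M is the empty graph, or the map π_n ↩ M is an isomorphism (i.e., the path fully embeds into the cycle). Consequently there are exactly n + 2 such admissible overlaps up to isomorphism of spans. -/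
open CategoryTheory

/-- The directed path with `n` edges (`n+1` vertices). -/
def pathGraph (n : ℕ) : MultiGraph :=
  ⟨Fin (n + 1), Fin n, fun e => e.castSucc, fun e => e.succ⟩

/-- The directed cycle with `n` vertices and `n` edges. -/
def cycleGraph (n : ℕ) : MultiGraph :=
  ⟨Fin n, Fin n, id, fun e => ⟨(e.val + 1) % n, Nat.mod_lt _ e.pos⟩⟩

/-- A rigid directed multigraph without self-loops: no self-loops, and every
vertex has out-degree ≤ 1 and in-degree ≤ 1 (injective source and target
maps). -/
def IsRigid (G : MultiGraph) : Prop :=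
  (∀ e, G.s e ≠ G.t e) ∧ Function.Injective G.s ∧ Function.Injective G.t

/-- An admissible overlap of the path `π_n` and the cycle `λ_{n+1}`: a monic
span `(π_n ↩ M ↪ λ_{n+1})` whose pushout is again a rigid graph without
self-loops. -/
structure AdmissibleOverlap (n : ℕ) where
  M : MultiGraph
  f : M ⟶ pathGraph n
  g : M ⟶ cycleGraph (n + 1)
  mono_f : Mono f
  mono_g : Mono g
  admissible : ∃ (P : MultiGraph) (iP : pathGraph n ⟶ P)
    (iC : cycleGraph (n + 1) ⟶ P), IsPushout f g iP iC ∧ IsRigid P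

/-- Isomorphism of overlaps: an isomorphism of the middle objects commuting
with the two legs of the spans. -/
def overlapIso (n : ℕ) (O O' : AdmissibleOverlap n) : Prop :=
  ∃ φ : O.M ≅ O'.M, φ.hom ≫ O'.f = O.f ∧ φ.hom ≫ O'.g = O.g
section Aux
open CategoryTheory Limits

@[simp] lemma MultiGraph.id_onV (G : MultiGraph) : (𝟙 G : G ⟶ G).onV = id := rfl
@[simp] lemma MultiGraph.id_onE (G : MultiGraph) : (𝟙 G : G ⟶ G).onE = id := rfl

lemma mg_mono_of_inj {G H : MultiGraph} (f : G ⟶ H) (hV : Function.Injective f.onV)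
    (hE : Function.Injective f.onE) : Mono f := by
  constructor
  intro Z a b h
  have hV' := congrArg MultiGraphHom.onV h
  have hE' := congrArg MultiGraphHom.onE h
  apply MultiGraphHom.ext
  · funext x; exact hV (congrFun hV' x)
  · funext x; exact hE (congrFun hE' x)

/-- single vertex graph -/
def vertG : MultiGraph := ⟨PUnit, Empty, Empty.elim, Empty.elim⟩

def vertHom {G : MultiGraph} (v : G.V) : vertG ⟶ G :=
  ⟨fun _ => v, Empty.elim, fun e => e.elim, fun e => e.elim⟩

/-- single edge graph -/
def edgeG : MultiGraph := ⟨Bool, PUnit,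
  fun _ => false, fun _ => true⟩

def edgeHom {G : MultiGraph} (e : G.E) : edgeG ⟶ G :=
  ⟨fun b => match b with | false => G.s e | true => G.t e, fun _ => e,
   fun _ => rfl, fun _ => rfl⟩

lemma mg_onV_inj_of_mono {G H : MultiGraph} (f : G ⟶ H) (hf : Mono f) :
    Function.Injective f.onV := by
  intro a b h
  have : vertHom a ≫ f = vertHom b ≫ f := by
    apply MultiGraphHom.ext
    · funext x; exact h
    · funext x; exact x.elim
  have := (cancel_mono f).mp this
  exact congrFun (congrArg MultiGraphHom.onV this) PUnit.unit

lemma mg_onE_inj_of_mono {G H : MultiGraph} (f : G ⟶ H) (hf : Mono f) :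
    Function.Injective f.onE := by
  intro a b h
  have : edgeHom a ≫ f = edgeHom b ≫ f := by
    apply MultiGraphHom.ext
    · funext x
      cases x with
      | false =>
        show f.onV (G.s a) = f.onV (G.s b)
        rw [← f.src, ← f.src, h]
      | true =>
        show f.onV (G.t a) = f.onV (G.t b)
        rw [← f.tgt, ← f.tgt, h]
    · funext x; exact h
  have := (cancel_mono f).mp this
  exact congrFun (congrArg MultiGraphHom.onE this) PUnit.unit

end Aux

section Glue
open CategoryTheory Limits

variable {M A B : MultiGraph} (f : M ⟶ A) (g : M ⟶ B)

/-- relation on vertices identifying `f m` with `g m` -/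
def relV : (A.V ⊕ B.V) → (A.V ⊕ B.V) → Prop := fun x y =>
  x = y ∨ (∃ m, x = .inl (f.onV m) ∧ y = .inr (g.onV m)) ∨
    (∃ m, x = .inr (g.onV m) ∧ y = .inl (f.onV m))

/-- relation on edges identifying `f m` with `g m` -/
def relE : (A.E ⊕ B.E) → (A.E ⊕ B.E) → Prop := fun x y =>
  x = y ∨ (∃ m, x = .inl (f.onE m) ∧ y = .inr (g.onE m)) ∨
    (∃ m, x = .inr (g.onE m) ∧ y = .inl (f.onE m))

/-- the glued graph -/
def glueG : MultiGraph where
  V := Quot (relV f g)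
  E := Quot (relE f g)
  s := Quot.lift (fun x => Quot.mk _ (Sum.map A.s B.s x)) (by
    rintro x y (rfl | ⟨m, rfl, rfl⟩ | ⟨m, rfl, rfl⟩)
    · rfl
    · exact Quot.sound (Or.inr (Or.inl ⟨M.s m, by simp [f.src], by simp [g.src]⟩))
    · exact Quot.sound (Or.inr (Or.inr ⟨M.s m, by simp [g.src], by simp [f.src]⟩)))
  t := Quot.lift (fun x => Quot.mk _ (Sum.map A.t B.t x)) (by
    rintro x y (rfl | ⟨m, rfl, rfl⟩ | ⟨m, rfl, rfl⟩)
    · rfl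
    · exact Quot.sound (Or.inr (Or.inl ⟨M.t m, by simp [f.tgt], by simp [g.tgt]⟩))
    · exact Quot.sound (Or.inr (Or.inr ⟨M.t m, by simp [g.tgt], by simp [f.tgt]⟩)))

def glueInl : A ⟶ glueG f g :=
  ⟨fun v => Quot.mk _ (.inl v), fun e => Quot.mk _ (.inl e), fun _ => rfl, fun _ => rfl⟩

def glueInr : B ⟶ glueG f g :=
  ⟨fun v => Quot.mk _ (.inr v), fun e => Quot.mk _ (.inr e), fun _ => rfl, fun _ => rfl⟩

lemma glue_comm : f ≫ glueInl f g = g ≫ glueInr f g := by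
  apply MultiGraphHom.ext
  · funext m; exact Quot.sound (Or.inr (Or.inl ⟨m, rfl, rfl⟩))
  · funext m; exact Quot.sound (Or.inr (Or.inl ⟨m, rfl, rfl⟩))

lemma relE_equivalence (hf : Function.Injective f.onE) (hg : Function.Injective g.onE) :
    Equivalence (relE f g) := by
  constructor
  · intro x; exact Or.inl rfl
  · rintro x y (rfl | ⟨m, rfl, rfl⟩ | ⟨m, rfl, rfl⟩)
    · exact Or.inl rfl
    · exact Or.inr (Or.inr ⟨m, rfl, rfl⟩)
    · exact Or.inr (Or.inl ⟨m, rfl, rfl⟩)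
  · rintro x y z (rfl | ⟨m, rfl, rfl⟩ | ⟨m, rfl, rfl⟩) h
    · exact h
    · rcases h with h | ⟨m', hm', rfl⟩ | ⟨m', hm', rfl⟩
      · exact Or.inr (Or.inl ⟨m, rfl, h ▸ rfl⟩)
      · exact absurd hm' (by simp)
      · obtain rfl : m = m' := hg (Sum.inr.inj hm')
        exact Or.inl rfl
    · rcases h with h | ⟨m', hm', rfl⟩ | ⟨m', hm', rfl⟩
      · exact Or.inr (Or.inr ⟨m, rfl, h ▸ rfl⟩)
      · obtain rfl : m = m' := hf (Sum.inl.inj hm')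
        exact Or.inl rfl
      · exact absurd hm' (by simp)

/-- In any pushout of a monic span, if an edge from `A` is identified with an
edge from `B`, then both come from `M`. -/
lemma glued_edge_of_eq {P : MultiGraph} {iP : A ⟶ P} {iC : B ⟶ P}
    (hpo : IsPushout f g iP iC)
    (hf : Function.Injective f.onE) (hg : Function.Injective g.onE)
    {e : A.E} {c : B.E} (h : iP.onE e = iC.onE c) :
    ∃ m, f.onE m = e ∧ g.onE m = c := by
  let u : P ⟶ glueG f g := hpo.desc (glueInl f g) (glueInr f g) (glue_comm f g)
  have h1 : iP ≫ u = glueInl f g := hpo.inl_desc _ _ _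
  have h2 : iC ≫ u = glueInr f g := hpo.inr_desc _ _ _
  have : (glueInl f g).onE e = (glueInr f g).onE c := by
    rw [← h1, ← h2]
    show u.onE (iP.onE e) = u.onE (iC.onE c)
    rw [h]
  have hrel : relE f g (.inl e) (.inr c) :=
    ((relE_equivalence f g hf hg).eqvGen_iff).mp (Quot.eq.mp this)
  rcases hrel with h | ⟨m, hm1, hm2⟩ | ⟨m, hm1, _⟩
  · exact absurd h (by simp)
  · exact ⟨m, (Sum.inl.inj hm1).symm, (Sum.inr.inj hm2).symm⟩
  · exact absurd hm1 (by simp)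

end Glue

section Pushouts
open CategoryTheory Limits

lemma rigid_path (n : ℕ) : IsRigid (pathGraph n) := by
  refine ⟨fun e h => ?_, fun a b h => ?_, fun a b h => ?_⟩
  · have := congrArg Fin.val h
    have h2 : Fin.val (n := n) e = Fin.val (n := n) e + 1 := this
    omega
  · exact Fin.castSucc_injective _ h
  · exact Fin.succ_injective _ h

lemma rigid_cycle (n : ℕ) (hn : 1 ≤ n) : IsRigid (cycleGraph (n + 1)) := by
  refine ⟨fun e h => ?_, fun a b h => id h, fun a b h => ?_⟩
  · have := congrArg Fin.val h
    simp only [cycleGraph, id] at this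
    rcases Nat.lt_or_ge e.val n with h' | h'
    · rw [Nat.mod_eq_of_lt (by omega)] at this; omega
    · have he : e.val = n := by omega
      rw [he, Nat.mod_self] at this; omega
  · have h' := congrArg Fin.val h
    simp only [cycleGraph] at h'
    have ha := a.isLt; have hb := b.isLt
    apply Fin.ext
    rcases Nat.lt_or_ge a.val n with h1 | h1 <;> rcases Nat.lt_or_ge b.val n with h2 | h2
    · rw [Nat.mod_eq_of_lt (by omega), Nat.mod_eq_of_lt (by omega)] at h'; omega
    · have : b.val = n := by omega
      rw [Nat.mod_eq_of_lt (by omega), this, Nat.mod_self] at h'; omega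
    · have : a.val = n := by omega
      rw [this, Nat.mod_self, Nat.mod_eq_of_lt (by omega)] at h'; omega
    · omega

/-- disjoint union of two graphs -/
def sumG (A B : MultiGraph) : MultiGraph :=
  ⟨A.V ⊕ B.V, A.E ⊕ B.E, Sum.map A.s B.s, Sum.map A.t B.t⟩

def sumInl (A B : MultiGraph) : A ⟶ sumG A B :=
  ⟨Sum.inl, Sum.inl, fun _ => rfl, fun _ => rfl⟩

def sumInr (A B : MultiGraph) : B ⟶ sumG A B :=
  ⟨Sum.inr, Sum.inr, fun _ => rfl, fun _ => rfl⟩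

lemma rigid_sum {A B : MultiGraph} (hA : IsRigid A) (hB : IsRigid B) :
    IsRigid (sumG A B) := by
  obtain ⟨hA1, hA2, hA3⟩ := hA
  obtain ⟨hB1, hB2, hB3⟩ := hB
  refine ⟨fun e h => ?_, fun a b h => ?_, fun a b h => ?_⟩
  · rcases e with e | e
    · exact hA1 e (Sum.inl.inj h)
    · exact hB1 e (Sum.inr.inj h)
  · rcases a with a | a <;> rcases b with b | b <;> simp [sumG, Sum.map] at h ⊢
    · exact hA2 h
    · exact hB2 h
  · rcases a with a | a <;> rcases b with b | b <;> simp [sumG, Sum.map] at h ⊢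
    · exact hA3 h
    · exact hB3 h

lemma pushout_of_empty {M A B : MultiGraph} (hV : IsEmpty M.V) (hE : IsEmpty M.E)
    (f : M ⟶ A) (g : M ⟶ B) : IsPushout f g (sumInl A B) (sumInr A B) := by
  have weq : f ≫ sumInl A B = g ≫ sumInr A B := by
    apply MultiGraphHom.ext
    · funext m; exact hV.elim m
    · funext m; exact hE.elim m
  have hcolim : IsColimit (PushoutCocone.mk (sumInl A B) (sumInr A B) weq) := by
    refine PushoutCocone.IsColimit.mk weq
      (fun s => ⟨Sum.elim s.inl.onV s.inr.onV, Sum.elim s.inl.onE s.inr.onE, ?_, ?_⟩)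
      (fun s => ?_) (fun s => ?_) (fun s m h1 h2 => ?_)
    · rintro (e | e)
      · exact s.inl.src e
      · exact s.inr.src e
    · rintro (e | e)
      · exact s.inl.tgt e
      · exact s.inr.tgt e
    · apply MultiGraphHom.ext
      · funext v; rfl
      · funext e; rfl
    · apply MultiGraphHom.ext
      · funext v; rfl
      · funext e; rfl
    · apply MultiGraphHom.ext
      · funext v
        rcases v with v | v
        · exact congrFun (congrArg MultiGraphHom.onV h1) v
        · exact congrFun (congrArg MultiGraphHom.onV h2) v
      · funext e
        rcases e with e | e
        · exact congrFun (congrArg MultiGraphHom.onE h1) e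
        · exact congrFun (congrArg MultiGraphHom.onE h2) e
  exact IsPushout.of_isColimit hcolim

lemma pushout_of_iso {M A B : MultiGraph} (f : M ⟶ A) [IsIso f] (g : M ⟶ B) :
    IsPushout f g (inv f ≫ g) (𝟙 B) :=
  IsPushout.of_horiz_isIso ⟨by simp⟩

end Pushouts

section Key
open CategoryTheory Limits

lemma key (n : ℕ) {M : MultiGraph} (f : M ⟶ pathGraph n) (g : M ⟶ cycleGraph (n + 1))
    (hfm : Mono f) (hgm : Mono g) {P : MultiGraph} {iP : pathGraph n ⟶ P}
    {iC : cycleGraph (n + 1) ⟶ P} (hpo : IsPushout f g iP iC) (hrig : IsRigid P) :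
    (IsEmpty M.V ∧ IsEmpty M.E) ∨ IsIso f := by
  have hfE := mg_onE_inj_of_mono f hfm
  have hgE := mg_onE_inj_of_mono g hgm
  have hfV := mg_onV_inj_of_mono f hfm
  obtain ⟨hnl, hsin, htin⟩ := hrig
  by_cases hM : Nonempty M.V
  case neg =>
    left
    have hV : IsEmpty M.V := not_nonempty_iff.mp hM
    exact ⟨hV, ⟨fun e => hV.false (M.s e)⟩⟩
  right
  have comm := hpo.w
  have commV : ∀ m : M.V, iP.onV (f.onV m) = iC.onV (g.onV m) := fun m =>
    congrFun (congrArg MultiGraphHom.onV comm) m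
  have eglue : ∀ (m : M.V) (e : (pathGraph n).E), (pathGraph n).s e = f.onV m →
      ∃ m', f.onE m' = e := by
    intro m e he
    have hs : P.s (iP.onE e) = P.s (iC.onE (g.onV m)) := by
      rw [iP.src, he, commV m]
      exact (iC.src (g.onV m)).symm
    obtain ⟨m', hm', _⟩ := glued_edge_of_eq f g hpo hfE hgE (hsin hs)
    exact ⟨m', hm'⟩
  have tglue : ∀ (m : M.V) (e : (pathGraph n).E), (pathGraph n).t e = f.onV m →
      ∃ m', f.onE m' = e := by
    intro m e he
    have hlt : ((g.onV m).val + n) % (n + 1) < n + 1 := Nat.mod_lt _ (by omega)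
    let c : (cycleGraph (n + 1)).E := ⟨((g.onV m).val + n) % (n + 1), hlt⟩
    have hc : (cycleGraph (n + 1)).t c = g.onV m := by
      apply Fin.ext
      show (((g.onV m).val + n) % (n + 1) + 1) % (n + 1) = (g.onV m).val
      rw [Nat.mod_add_mod]
      have h2 : (g.onV m).val + n + 1 = (g.onV m).val + (n + 1) := by omega
      rw [h2, Nat.add_mod_right, Nat.mod_eq_of_lt (g.onV m).isLt]
    have ht : P.t (iP.onE e) = P.t (iC.onE c) := by
      rw [iP.tgt, iC.tgt, he, hc]
      exact commV m
    obtain ⟨m', hm', _⟩ := glued_edge_of_eq f g hpo hfE hgE (htin ht)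
    exact ⟨m', hm'⟩
  have step_up : ∀ j, j + 1 ≤ n → (∃ m, (f.onV m).val = j) → ∃ m, (f.onV m).val = j + 1 := by
    rintro j hj ⟨m, hm⟩
    have he : (pathGraph n).s (⟨j, by omega⟩ : Fin n) = f.onV m := by
      apply Fin.ext
      show j = (f.onV m).val
      omega
    obtain ⟨m', hm'⟩ := eglue m _ he
    refine ⟨M.t m', ?_⟩
    have htg := f.tgt m'
    rw [hm'] at htg
    rw [← htg]
    rfl
  have step_down : ∀ j, (∃ m, (f.onV m).val = j + 1) → ∃ m, (f.onV m).val = j := by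
    rintro j ⟨m, hm⟩
    have hjlt : j + 1 < n + 1 := by have := (f.onV m).isLt; omega
    have he : (pathGraph n).t (⟨j, by omega⟩ : Fin n) = f.onV m := by
      apply Fin.ext
      show j + 1 = (f.onV m).val
      omega
    obtain ⟨m', hm'⟩ := tglue m _ he
    refine ⟨M.s m', ?_⟩
    have hsr := f.src m'
    rw [hm'] at hsr
    rw [← hsr]
    rfl
  obtain ⟨m₀⟩ := hM
  have hzero : ∀ i (m : M.V), (f.onV m).val = i → ∃ m', (f.onV m').val = 0 := by
    intro i
    induction i with
    | zero => exact fun m h => ⟨m, h⟩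
    | succ j ih =>
      intro m h
      obtain ⟨m', h'⟩ := step_down j ⟨m, h⟩
      exact ih m' h'
  have hall : ∀ j, j ≤ n → ∃ m, (f.onV m).val = j := by
    intro j
    induction j with
    | zero => exact fun _ => hzero _ m₀ rfl
    | succ j ih => exact fun hj => step_up j hj (ih (by omega))
  have hVsurj : Function.Surjective f.onV := by
    intro v
    obtain ⟨m, hm⟩ := hall v.val (by have := v.isLt; omega)
    exact ⟨m, Fin.ext hm⟩
  have hEsurj : Function.Surjective f.onE := by
    intro e
    obtain ⟨m, hm⟩ := hall e.val (by have := e.isLt; omega)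
    have he : (pathGraph n).s e = f.onV m := by
      apply Fin.ext
      show e.val = (f.onV m).val
      omega
    obtain ⟨m', hm'⟩ := eglue m e he
    exact ⟨m', hm'⟩
  let eV := Equiv.ofBijective f.onV ⟨hfV, hVsurj⟩
  let eE := Equiv.ofBijective f.onE ⟨hfE, hEsurj⟩
  refine ⟨⟨⟨eV.symm, eE.symm, ?_, ?_⟩, ?_, ?_⟩⟩
  · intro e
    apply hfV
    show f.onV (M.s (eE.symm e)) = f.onV (eV.symm ((pathGraph n).s e))
    have h2 : f.onE (eE.symm e) = e := eE.apply_symm_apply e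
    have h1 : f.onV (eV.symm ((pathGraph n).s e)) = (pathGraph n).s e :=
      eV.apply_symm_apply _
    rw [← f.src, h2, h1]
  · intro e
    apply hfV
    show f.onV (M.t (eE.symm e)) = f.onV (eV.symm ((pathGraph n).t e))
    have h2 : f.onE (eE.symm e) = e := eE.apply_symm_apply e
    have h1 : f.onV (eV.symm ((pathGraph n).t e)) = (pathGraph n).t e :=
      eV.apply_symm_apply _
    rw [← f.tgt, h2, h1]
  · apply MultiGraphHom.ext
    · funext x; exact eV.symm_apply_apply x
    · funext x; exact eE.symm_apply_apply x
  · apply MultiGraphHom.ext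
    · funext x; exact eV.apply_symm_apply x
    · funext x; exact eE.apply_symm_apply x

end Key

section Count
open CategoryTheory Limits

def pvert0 (n : ℕ) : (pathGraph n).V := ⟨0, Nat.succ_pos n⟩

/-- A hom from the path to the cycle is determined by the image of vertex 0. -/
lemma hom_determined (n : ℕ) (h h' : pathGraph n ⟶ cycleGraph (n + 1))
    (h0 : h.onV (pvert0 n) = h'.onV (pvert0 n)) : h = h' := by
  have honE : ∀ (k : pathGraph n ⟶ cycleGraph (n + 1)) (e : (pathGraph n).E),
      k.onE e = k.onV ((pathGraph n).s e) := by
    intro k e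
    exact k.src e
  have hV : ∀ j (hj : j < n + 1), h.onV ⟨j, hj⟩ = h'.onV ⟨j, hj⟩ := by
    intro j
    induction j with
    | zero =>
      intro hj
      have hp : (⟨0, hj⟩ : Fin (n + 1)) = pvert0 n := rfl
      rw [hp]
      exact h0
    | succ j ih =>
      intro hj
      have hj' : j < n + 1 := by omega
      have hjn : j < n := by omega
      let e : (pathGraph n).E := ⟨j, hjn⟩
      have hse : (pathGraph n).s e = (⟨j, hj'⟩ : Fin (n + 1)) := rfl
      have hte : (pathGraph n).t e = (⟨j + 1, hj⟩ : Fin (n + 1)) := rfl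
      have he : h.onE e = h'.onE e := by
        rw [honE h e, honE h' e, hse, ih hj']
      calc h.onV ⟨j + 1, hj⟩ = (cycleGraph (n + 1)).t (h.onE e) := by rw [h.tgt, hte]
        _ = (cycleGraph (n + 1)).t (h'.onE e) := by rw [he]
        _ = h'.onV ⟨j + 1, hj⟩ := by rw [h'.tgt, hte]
  apply MultiGraphHom.ext
  · funext v
    obtain ⟨j, hj⟩ := v
    exact hV j hj
  · funext e
    rw [honE h e, honE h' e]
    obtain ⟨j, hj⟩ := (pathGraph n).s e
    exact hV j hj

/-- the empty graph -/
def emptyG : MultiGraph := ⟨Empty, Empty, Empty.elim, Empty.elim⟩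

def emptyHom (G : MultiGraph) : emptyG ⟶ G :=
  ⟨Empty.elim, Empty.elim, fun e => e.elim, fun e => e.elim⟩

/-- the rotation embedding of the path into the cycle -/
def rotHom (n : ℕ) (k : Fin (n + 1)) : pathGraph n ⟶ cycleGraph (n + 1) where
  onV := fun v => ⟨(v.val + k.val) % (n + 1), Nat.mod_lt _ (Nat.succ_pos n)⟩
  onE := fun e => ⟨(e.val + k.val) % (n + 1), Nat.mod_lt _ (Nat.succ_pos n)⟩
  src := fun e => rfl
  tgt := by
    intro e
    apply Fin.ext
    show ((e.val + k.val) % (n + 1) + 1) % (n + 1) = (e.val + 1 + k.val) % (n + 1)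
    rw [Nat.mod_add_mod]
    ring_nf

lemma rotHom_onV_inj (n : ℕ) (k : Fin (n + 1)) : Function.Injective (rotHom n k).onV := by
  intro a b h
  have h' := congrArg Fin.val h
  simp only [rotHom] at h'
  have ha := a.isLt; have hb := b.isLt; have hk := k.isLt
  apply Fin.ext
  rcases Nat.lt_or_ge (a.val + k.val) (n + 1) with h1 | h1 <;>
    rcases Nat.lt_or_ge (b.val + k.val) (n + 1) with h2 | h2
  · rw [Nat.mod_eq_of_lt h1, Nat.mod_eq_of_lt h2] at h'; omega
  · rw [Nat.mod_eq_of_lt h1, Nat.mod_eq_sub_mod h2, Nat.mod_eq_of_lt (by omega)] at h'; omega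
  · rw [Nat.mod_eq_sub_mod h1, Nat.mod_eq_of_lt (by omega), Nat.mod_eq_of_lt h2] at h'; omega
  · rw [Nat.mod_eq_sub_mod h1, Nat.mod_eq_sub_mod h2,
      Nat.mod_eq_of_lt (by omega), Nat.mod_eq_of_lt (by omega)] at h'; omega

lemma rotHom_onE_inj (n : ℕ) (k : Fin (n + 1)) : Function.Injective (rotHom n k).onE := by
  intro a b h
  have hcast : (rotHom n k).onV a.castSucc = (rotHom n k).onV b.castSucc := by
    apply Fin.ext
    show (a.castSucc.val + k.val) % (n + 1) = (b.castSucc.val + k.val) % (n + 1)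
    have h' := congrArg Fin.val h
    exact h'
  exact Fin.castSucc_injective _ (rotHom_onV_inj n k hcast)

/-- the empty overlap -/
def oEmpty (n : ℕ) (hn : 1 ≤ n) : AdmissibleOverlap n where
  M := emptyG
  f := emptyHom _
  g := emptyHom _
  mono_f := mg_mono_of_inj _ (fun a => a.elim) (fun a => a.elim)
  mono_g := mg_mono_of_inj _ (fun a => a.elim) (fun a => a.elim)
  admissible := ⟨sumG _ _, sumInl _ _, sumInr _ _,
    pushout_of_empty ⟨Empty.elim⟩ ⟨Empty.elim⟩ _ _,
    rigid_sum (rigid_path n) (rigid_cycle n hn)⟩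

/-- the full overlaps -/
def oRot (n : ℕ) (hn : 1 ≤ n) (k : Fin (n + 1)) : AdmissibleOverlap n where
  M := pathGraph n
  f := 𝟙 _
  g := rotHom n k
  mono_f := inferInstance
  mono_g := mg_mono_of_inj _ (rotHom_onV_inj n k) (rotHom_onE_inj n k)
  admissible := ⟨cycleGraph (n + 1), inv (𝟙 (pathGraph n)) ≫ rotHom n k, 𝟙 _,
    pushout_of_iso _ _, rigid_cycle n hn⟩

def cval (n : ℕ) (v : (cycleGraph (n + 1)).V) : Fin (n + 1) := v

open Classical in
/-- the invariant classifying overlaps -/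
noncomputable def invar (n : ℕ) (O : AdmissibleOverlap n) : Fin (n + 2) :=
  if h : Nonempty O.M.V ∧ IsIso O.f then
    haveI := h.2
    ⟨(cval n (O.g.onV ((inv O.f).onV (pvert0 n)))).val + 1, by omega⟩
  else ⟨0, by omega⟩

end Count

section Count2
open CategoryTheory Limits

lemma invar_pos (n : ℕ) (O : AdmissibleOverlap n) (h : Nonempty O.M.V ∧ IsIso O.f)
    (k : Fin (n + 1))
    (hk : (haveI := h.2; cval n (O.g.onV ((inv O.f).onV (pvert0 n)))) = k) :
    invar n O = ⟨k.val + 1, by omega⟩ := by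
  rw [invar, dif_pos h]
  exact congrArg (fun x : Fin (n + 1) => (⟨x.val + 1, by omega⟩ : Fin (n + 2))) hk

lemma invar_oEmpty (n : ℕ) (hn : 1 ≤ n) : invar n (oEmpty n hn) = ⟨0, by omega⟩ := by
  rw [invar, dif_neg]
  rintro ⟨⟨v⟩, -⟩
  exact v.elim

lemma invar_oRot (n : ℕ) (hn : 1 ≤ n) (k : Fin (n + 1)) :
    invar n (oRot n hn k) = ⟨k.val + 1, by omega⟩ := by
  have hio : IsIso (oRot n hn k).f := show IsIso (𝟙 (pathGraph n)) from inferInstance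
  refine invar_pos n _ ⟨⟨pvert0 n⟩, hio⟩ k ?_
  haveI := hio
  have h1 : inv (oRot n hn k).f = 𝟙 (pathGraph n) := by
    apply IsIso.inv_eq_of_hom_inv_id
    show (𝟙 (pathGraph n)) ≫ (𝟙 (pathGraph n)) = 𝟙 (pathGraph n)
    simp
  rw [h1]
  show (rotHom n k).onV (pvert0 n) = k
  apply Fin.ext
  show ((pvert0 n).val + k.val) % (n + 1) = k.val
  show (0 + k.val) % (n + 1) = k.val
  rw [Nat.zero_add, Nat.mod_eq_of_lt k.isLt]

lemma invar_eq_of_overlapIso (n : ℕ) (O O' : AdmissibleOverlap n)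
    (h : overlapIso n O O') : invar n O = invar n O' := by
  obtain ⟨φ, hf, hg⟩ := h
  have hNe : Nonempty O.M.V ↔ Nonempty O'.M.V :=
    ⟨fun ⟨v⟩ => ⟨φ.hom.onV v⟩, fun ⟨v⟩ => ⟨φ.inv.onV v⟩⟩
  have hf2 : φ.inv ≫ O.f = O'.f := by
    rw [← hf, ← Category.assoc, Iso.inv_hom_id, Category.id_comp]
  have hg2 : φ.inv ≫ O.g = O'.g := by
    rw [← hg, ← Category.assoc, Iso.inv_hom_id, Category.id_comp]
  have hIso : IsIso O.f ↔ IsIso O'.f := by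
    constructor
    · intro hi
      haveI := hi
      rw [← hf2]
      infer_instance
    · intro hi
      haveI := hi
      rw [← hf]
      infer_instance
  by_cases hc : Nonempty O.M.V ∧ IsIso O.f
  · have hc' : Nonempty O'.M.V ∧ IsIso O'.f := ⟨hNe.mp hc.1, hIso.mp hc.2⟩
    haveI := hc.2; haveI := hc'.2
    have hinv : inv O.f = inv O'.f ≫ φ.inv := by
      apply IsIso.inv_eq_of_hom_inv_id
      rw [← hf]
      simp
    have heq : inv O.f ≫ O.g = inv O'.f ≫ O'.g := by
      rw [hinv, Category.assoc, hg2]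
    have hval : cval n (O.g.onV ((inv O.f).onV (pvert0 n))) =
        cval n (O'.g.onV ((inv O'.f).onV (pvert0 n))) :=
      congrArg (cval n) (congrFun (congrArg MultiGraphHom.onV heq) (pvert0 n))
    rw [invar, invar, dif_pos hc, dif_pos hc']
    exact congrArg (fun x : Fin (n + 1) => (⟨x.val + 1, by omega⟩ : Fin (n + 2))) hval
  · have hc' : ¬(Nonempty O'.M.V ∧ IsIso O'.f) := fun h => hc ⟨hNe.mpr h.1, hIso.mpr h.2⟩
    rw [invar, invar, dif_neg hc, dif_neg hc']

end Count2


/-- A monic span `(π_n ↩ M ↪ λ_{n+1})` has a rigid, self-loop-free pushout iff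
the overlap `M` is empty or the path fully embeds (`M ↪ π_n` is an
isomorphism); consequently there are exactly `n + 2` admissible overlaps up to
isomorphism of spans. -/
theorem stmt_13 (n : ℕ) (hn : 1 ≤ n) :
    (∀ (M : MultiGraph) (f : M ⟶ pathGraph n) (g : M ⟶ cycleGraph (n + 1)),
      Mono f → Mono g →
      ((∃ (P : MultiGraph) (iP : pathGraph n ⟶ P) (iC : cycleGraph (n + 1) ⟶ P),
          IsPushout f g iP iC ∧ IsRigid P) ↔
        ((IsEmpty M.V ∧ IsEmpty M.E) ∨ IsIso f))) ∧
    Nat.card (Quot (overlapIso n)) = n + 2 := by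
  constructor
  · intro M f g hf hg
    constructor
    · rintro ⟨P, iP, iC, hpo, hrig⟩
      exact key n f g hf hg hpo hrig
    · rintro (⟨hV, hE⟩ | hiso)
      · exact ⟨sumG _ _, sumInl _ _, sumInr _ _, pushout_of_empty hV hE f g,
          rigid_sum (rigid_path n) (rigid_cycle n hn)⟩
      · haveI := hiso
        exact ⟨cycleGraph (n + 1), inv f ≫ g, 𝟙 _, pushout_of_iso f g, rigid_cycle n hn⟩
  · -- counting part
    have hempty_of_not_cond : ∀ O : AdmissibleOverlap n,
        ¬(Nonempty O.M.V ∧ IsIso O.f) → IsEmpty O.M.V := by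
      intro O hc
      obtain ⟨P, iP, iC, hpo, hrig⟩ := O.admissible
      rcases key n O.f O.g O.mono_f O.mono_g hpo hrig with ⟨hV, _⟩ | hiso
      · exact hV
      · exact not_nonempty_iff.mp (fun hne => hc ⟨hne, hiso⟩)
    let F : Quot (overlapIso n) → Fin (n + 2) :=
      Quot.lift (invar n) (invar_eq_of_overlapIso n)
    have hsurj : Function.Surjective F := by
      rintro ⟨kv, hk⟩
      cases kv with
      | zero => exact ⟨Quot.mk _ (oEmpty n hn), invar_oEmpty n hn⟩
      | succ j =>
        have hj : j < n + 1 := by omega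
        exact ⟨Quot.mk _ (oRot n hn ⟨j, hj⟩), invar_oRot n hn ⟨j, hj⟩⟩
    have hinj : Function.Injective F := by
      intro x y
      obtain ⟨O, rfl⟩ := Quot.exists_rep x
      obtain ⟨O', rfl⟩ := Quot.exists_rep y
      intro h
      have h : invar n O = invar n O' := h
      apply Quot.sound
      by_cases hc : Nonempty O.M.V ∧ IsIso O.f
      · have hc' : Nonempty O'.M.V ∧ IsIso O'.f := by
          by_contra hcn
          rw [invar, invar, dif_pos hc, dif_neg hcn] at h
          exact absurd (congrArg Fin.val h) (by simp)
        haveI := hc.2; haveI := hc'.2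
        have hval : cval n (O.g.onV ((inv O.f).onV (pvert0 n))) =
            cval n (O'.g.onV ((inv O'.f).onV (pvert0 n))) := by
          rw [invar, invar, dif_pos hc, dif_pos hc'] at h
          have h2 : (cval n (O.g.onV ((inv O.f).onV (pvert0 n)))).val + 1 =
              (cval n (O'.g.onV ((inv O'.f).onV (pvert0 n)))).val + 1 :=
            congrArg Fin.val h
          exact Fin.ext (by omega)
        have heq : inv O.f ≫ O.g = inv O'.f ≫ O'.g := by
          apply hom_determined n
          exact hval
        refine ⟨asIso O.f ≪≫ (asIso O'.f).symm, ?_, ?_⟩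
        · show (O.f ≫ inv O'.f) ≫ O'.f = O.f
          simp
        · show (O.f ≫ inv O'.f) ≫ O'.g = O.g
          rw [Category.assoc, ← heq]
          simp
      · have hcn' : ¬(Nonempty O'.M.V ∧ IsIso O'.f) := by
          intro hc'
          rw [invar, invar, dif_neg hc, dif_pos hc'] at h
          exact absurd (congrArg Fin.val h).symm (by simp)
        have hOe : IsEmpty O.M.V := hempty_of_not_cond O hc
        have hOe' : IsEmpty O'.M.V := hempty_of_not_cond O' hcn'
        have hEe : IsEmpty O.M.E := ⟨fun e => hOe.false (O.M.s e)⟩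
        have hEe' : IsEmpty O'.M.E := ⟨fun e => hOe'.false (O'.M.s e)⟩
        refine ⟨⟨⟨hOe.elim, hEe.elim, fun e => hEe.elim e, fun e => hEe.elim e⟩,
          ⟨hOe'.elim, hEe'.elim, fun e => hEe'.elim e, fun e => hEe'.elim e⟩, ?_, ?_⟩, ?_, ?_⟩
        · apply MultiGraphHom.ext
          · funext v; exact hOe.elim v
          · funext e; exact hEe.elim e
        · apply MultiGraphHom.ext
          · funext v; exact hOe'.elim v
          · funext e; exact hEe'.elim e
        · apply MultiGraphHom.ext
          · funext v; exact hOe.elim v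
          · funext e; exact hEe.elim e
        · apply MultiGraphHom.ext
          · funext v; exact hOe.elim v
          · funext e; exact hEe.elim e
    exact Nat.card_eq_of_equiv_fin (Equiv.ofBijective F ⟨hinj, hsurj⟩)
end

section
/- In the category of directed multigraphs, given a vertex-deletion rule (∅ ↩ ∅ ↪ •) and a match sending the single input vertex to a vertex v of a finite graph X, the final pullback complement of (∅ ↪ •, • ↪ X) exists and is the graph obtained from X by deleting v and all edges incident to v. -/
open CategoryTheory

/-- Final pullback complement: given `f : A ⟶ B` and `g : B ⟶ X`, a pair
`(h : A ⟶ D, k : D ⟶ X)` is an FPC of `(f, g)` if the square is a pullback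
and it is universal among pullback squares over `g` whose top morphism
factors through `f`. -/
def IsFPC {C : Type*} [Category C] {A B D X : C}
    (f : A ⟶ B) (g : B ⟶ X) (h : A ⟶ D) (k : D ⟶ X) : Prop :=
  IsPullback f h g k ∧
  ∀ {A' D' : C} (f' : A' ⟶ B) (h' : A' ⟶ D') (k' : D' ⟶ X),
    IsPullback f' h' g k' → ∀ α : A' ⟶ A, α ≫ f = f' →
      ∃! δ : D' ⟶ D, δ ≫ k = k' ∧ h' ≫ δ = α ≫ h

/-- The empty graph. -/
def mgEmpty : MultiGraph := ⟨PEmpty, PEmpty, PEmpty.elim, PEmpty.elim⟩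

/-- The graph with a single vertex and no edges. -/
def vertexGraph : MultiGraph := ⟨PUnit, PEmpty, PEmpty.elim, PEmpty.elim⟩

/-- The graph obtained from `X` by deleting the vertex `v` together with all
edges incident to `v`. -/
def deleteVertex (X : MultiGraph) (v : X.V) : MultiGraph :=
  ⟨{w : X.V // w ≠ v}, {e : X.E // X.s e ≠ v ∧ X.t e ≠ v},
    fun e => ⟨X.s e.1, e.2.1⟩, fun e => ⟨X.t e.1, e.2.2⟩⟩

/-- The unique morphism from the empty graph. -/
def emptyTo (G : MultiGraph) : mgEmpty ⟶ G :=
  ⟨PEmpty.elim, PEmpty.elim, fun e => e.elim, fun e => e.elim⟩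

/-- The match sending the single vertex to `v : X.V`. -/
def matchAt (X : MultiGraph) (v : X.V) : vertexGraph ⟶ X :=
  ⟨fun _ => v, PEmpty.elim, fun e => e.elim, fun e => e.elim⟩

/-- The inclusion of the vertex-deleted graph. -/
def deleteVertexIncl (X : MultiGraph) (v : X.V) : deleteVertex X v ⟶ X :=
  ⟨Subtype.val, Subtype.val, fun _ => rfl, fun _ => rfl⟩

lemma hom_from_empty_unique {G : MultiGraph} (f g : mgEmpty ⟶ G) : f = g := by
  apply MultiGraphHom.ext
  · funext x; exact PEmpty.elim x
  · funext x; exact PEmpty.elim x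

/-- Any morphism into `mgEmpty` forces the source to have no vertices/edges. -/
lemma no_vertices {G : MultiGraph} (f : G ⟶ mgEmpty) (w : G.V) : False :=
  PEmpty.elim (f.onV w)

lemma no_edges {G : MultiGraph} (f : G ⟶ mgEmpty) (e : G.E) : False :=
  PEmpty.elim (f.onE e)

/-- In the category of directed multigraphs, for the vertex-deletion rule and
a match sending the single input vertex to a vertex `v` of a finite graph
`X`, the final pullback complement of `(∅ ↪ •, • ↪ X)` exists and is the
graph obtained from `X` by deleting `v` and all edges incident to `v`. -/
theorem stmt_14 (X : MultiGraph) [Finite X.V] [Finite X.E] (v : X.V) :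
    IsFPC (emptyTo vertexGraph) (matchAt X v)
      (emptyTo (deleteVertex X v)) (deleteVertexIncl X v) := by
  constructor
  · -- pullback square
    have comm : emptyTo vertexGraph ≫ matchAt X v
        = emptyTo (deleteVertex X v) ≫ deleteVertexIncl X v :=
      hom_from_empty_unique _ _
    refine IsPullback.of_isLimit' ⟨comm⟩ ?_
    refine Limits.PullbackCone.IsLimit.mk _ ?_ ?_ ?_ ?_
    · intro s
      refine ⟨fun w => ?_, fun e => PEmpty.elim (s.fst.onE e), ?_, ?_⟩
      · exfalso
        have h1 := congrFun (congrArg MultiGraphHom.onV s.condition) w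
        simp only [MultiGraph.comp_onV, Function.comp] at h1
        exact (s.snd.onV w).2 ((h1 : v = (s.snd.onV w).1).symm)
      · intro e; exact PEmpty.elim (s.fst.onE e)
      · intro e; exact PEmpty.elim (s.fst.onE e)
    · intro s
      apply MultiGraphHom.ext
      · funext w
        exfalso
        have h1 := congrFun (congrArg MultiGraphHom.onV s.condition) w
        simp only [MultiGraph.comp_onV, Function.comp] at h1
        exact (s.snd.onV w).2 ((h1 : v = (s.snd.onV w).1).symm)
      · funext e; exact PEmpty.elim (s.fst.onE e)
    · intro s
      apply MultiGraphHom.ext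
      · funext w
        exfalso
        have h1 := congrFun (congrArg MultiGraphHom.onV s.condition) w
        simp only [MultiGraph.comp_onV, Function.comp] at h1
        exact (s.snd.onV w).2 ((h1 : v = (s.snd.onV w).1).symm)
      · funext e; exact PEmpty.elim (s.fst.onE e)
    · intro s m _ _
      apply MultiGraphHom.ext
      · funext w; exact PEmpty.elim (m.onV w)
      · funext e; exact PEmpty.elim (m.onE e)
  · -- universality
    intro A' D' f' h' k' hpb α hα
    -- key: no vertex of D' maps to v
    have key : ∀ w : D'.V, k'.onV w ≠ v := by
      intro w hw
      -- build a cone from vertexGraph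
      have hcomm : (𝟙 vertexGraph) ≫ matchAt X v
          = (⟨fun _ => w, PEmpty.elim, fun e => e.elim, fun e => e.elim⟩ :
              vertexGraph ⟶ D') ≫ k' := by
        apply MultiGraphHom.ext
        · funext u; exact hw.symm
        · funext e; exact PEmpty.elim e
      have l := hpb.lift _ _ hcomm
      exact no_vertices (l ≫ α) PUnit.unit
    -- define δ
    refine ⟨⟨fun w => ⟨k'.onV w, key w⟩,
      fun e => ⟨k'.onE e, by rw [k'.src]; exact key _, by rw [k'.tgt]; exact key _⟩,
      fun e => Subtype.ext (k'.src e), fun e => Subtype.ext (k'.tgt e)⟩, ?_, ?_⟩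
    · constructor
      · apply MultiGraphHom.ext
        · funext w; rfl
        · funext e; rfl
      · apply MultiGraphHom.ext
        · funext w; exact PEmpty.elim (α.onV w)
        · funext e; exact PEmpty.elim (α.onE e)
    · intro δ hδ
      apply MultiGraphHom.ext
      · funext w
        apply Subtype.ext
        exact congrFun (congrArg MultiGraphHom.onV hδ.1) w
      · funext e
        apply Subtype.ext
        exact congrFun (congrArg MultiGraphHom.onE hδ.1) e
end

section
/- In an adhesive category, the van Kampen property implies uniqueness of pushout complements along monomorphisms: if m : A ↪ B is a monomorphism and g : B → D, then any two pushout complements of (m, g) — i.e., objects C with morphisms A → C → D making a pushout square with m and g — are isomorphic compatibly with the given morphisms. -/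
open CategoryTheory

open CategoryTheory.Limits in
/-- Auxiliary: the "back face" of the van Kampen cube is a pullback. -/
lemma aux_back_pb {C : Type*} [Category C] {A B D C₁ C₂ U : C}
    (m : A ⟶ B) [Mono m] {g : B ⟶ D} {a₁ : A ⟶ C₁} {c₁ : C₁ ⟶ D}
    {a₂ : A ⟶ C₂} {c₂ : C₂ ⟶ D} {p₁ : U ⟶ C₁} {p₂ : U ⟶ C₂} {u : A ⟶ U}
    (hU : IsPullback p₁ p₂ c₁ c₂) (h₂ : IsPullback m a₂ g c₂)
    (hw : m ≫ g = a₁ ≫ c₁) (hu₁ : u ≫ p₁ = a₁) (hu₂ : u ≫ p₂ = a₂) :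
    IsPullback u (𝟙 A) p₁ a₁ := by
  have big := ((IsKernelPair.id_of_mono m).paste_vert h₂).flip
  rw [Category.id_comp] at big
  -- big : IsPullback a₂ (𝟙 A) c₂ (m ≫ g)
  rw [hw, ← hu₂] at big
  exact IsPullback.of_right big (by simp [hu₁]) hU.flip

open CategoryTheory.Limits in
/-- Auxiliary: a pushout along an identity makes the opposite leg an iso. -/
lemma aux_iso {C : Type*} [Category C] {A U V : C} {u : A ⟶ U} {a : A ⟶ V} {p : U ⟶ V}
    (H : IsPushout (𝟙 A) u a p) : IsIso p := by
  refine ⟨H.desc u (𝟙 U) (by simp), by simp, H.hom_ext ?_ ?_⟩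
  · rw [H.inl_desc_assoc, Category.comp_id, ← H.w, Category.id_comp]
  · rw [H.inr_desc_assoc, Category.id_comp, Category.comp_id]

/-- In an adhesive category, pushout complements along monomorphisms are
unique: if `m : A ⟶ B` is a monomorphism and `g : B ⟶ D`, then any two pushout
complements of `(m, g)` are isomorphic compatibly with the given morphisms. -/
theorem stmt_18 {C : Type*} [Category C] [Adhesive C] {A B D : C}
    (m : A ⟶ B) [Mono m] (g : B ⟶ D) {C₁ C₂ : C}
    (a₁ : A ⟶ C₁) (c₁ : C₁ ⟶ D) (a₂ : A ⟶ C₂) (c₂ : C₂ ⟶ D)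
    (H₁ : IsPushout m a₁ g c₁) (H₂ : IsPushout m a₂ g c₂) :
    ∃ φ : C₁ ≅ C₂, a₁ ≫ φ.hom = a₂ ∧ φ.hom ≫ c₂ = c₁ := by
  have hc₁ : Mono c₁ := Adhesive.mono_of_isPushout_of_mono_left H₁
  have hpb₁ : IsPullback m a₁ g c₁ := Adhesive.isPullback_of_isPushout_of_mono_left H₁
  have hpb₂ : IsPullback m a₂ g c₂ := Adhesive.isPullback_of_isPushout_of_mono_left H₂
  have comm : a₁ ≫ c₁ = a₂ ≫ c₂ := H₁.w.symm.trans H₂.w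
  let U := Limits.pullback c₁ c₂
  let p₁ : U ⟶ C₁ := Limits.pullback.fst c₁ c₂
  let p₂ : U ⟶ C₂ := Limits.pullback.snd c₁ c₂
  have hU : IsPullback p₁ p₂ c₁ c₂ := IsPullback.of_hasPullback c₁ c₂
  let u : A ⟶ U := Limits.pullback.lift a₁ a₂ comm
  have hu₁ : u ≫ p₁ = a₁ := Limits.pullback.lift_fst _ _ _
  have hu₂ : u ≫ p₂ = a₂ := Limits.pullback.lift_snd _ _ _
  have hkp : IsPullback (𝟙 A) (𝟙 A) m m := IsKernelPair.id_of_mono m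
  have hback₁ : IsPullback u (𝟙 A) p₁ a₁ := aux_back_pb m hU hpb₂ H₁.w hu₁ hu₂
  have hback₂ : IsPullback u (𝟙 A) p₂ a₂ := aux_back_pb m hU.flip hpb₁ H₂.w hu₂ hu₁
  -- van Kampen cube over H₂ shows p₁ is an iso
  have po₁ : IsPushout (𝟙 A) u a₁ p₁ :=
    ((Adhesive.van_kampen H₂) (𝟙 A) u a₁ p₁ (𝟙 A) m p₂ c₁ hkp hback₂
      ⟨H₁.w.symm⟩ ⟨hU.w⟩ ⟨by simp [hu₁]⟩).mpr ⟨hpb₁.flip, hU⟩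
  -- van Kampen cube over H₁ shows p₂ is an iso
  have po₂ : IsPushout (𝟙 A) u a₂ p₂ :=
    ((Adhesive.van_kampen H₁) (𝟙 A) u a₂ p₂ (𝟙 A) m p₁ c₂ hkp hback₁
      ⟨H₂.w.symm⟩ ⟨hU.w.symm⟩ ⟨by simp [hu₂]⟩).mpr ⟨hpb₂.flip, hU.flip⟩
  have i₁ : IsIso p₁ := aux_iso po₁
  have i₂ : IsIso p₂ := aux_iso po₂
  refine ⟨(asIso p₁).symm ≪≫ asIso p₂, ?_, ?_⟩
  · simp only [Iso.trans_hom, Iso.symm_hom, asIso_inv, asIso_hom]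
    rw [← hu₁]
    simp [hu₂]
  · simp only [Iso.trans_hom, Iso.symm_hom, asIso_inv, asIso_hom, Category.assoc]
    rw [← hU.w]
    simp
end
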